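/- arXiv:2306.10417 — 9 statements merged into one kernel-verified Lean document; each statement's English description precedes it below -/
import Mathlib

section
/- For every nonnegative integer s, the maximum loneliness of the four positive integer speeds 8, 4s+3, 4s+11, 4s+19 equals (2s+7)/(8s+30); that is, ML(8, 4s+3, 4s+11, 4s+19) = (2s+7)/(8s+30). -/
/-- `dnn x` is the distance from `x` to the nearest integer:
`dnn x = min_{m : ℤ} |x - m|`. -/
noncomputable def dnn (x : ℝ) : ℝ := ⨅ m : ℤ, |x - m|

/-- The maximum loneliness of speeds `v 0, …, v (n-1)`:
`ML v = sup_{t : ℝ} min_{i} dnn (t * v i)`. -/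
noncomputable def ML {n : ℕ} (v : Fin n → ℝ) : ℝ := ⨆ t : ℝ, ⨅ i, dnn (t * v i)

lemma dnn_bdd (x : ℝ) : BddBelow (Set.range fun m : ℤ => |x - (m:ℝ)|) :=
  ⟨0, by rintro y ⟨m, rfl⟩; exact abs_nonneg _⟩
lemma dnn_ge {x c : ℝ} (h : ∀ m : ℤ, c ≤ |x - m|) : c ≤ dnn x := le_ciInf h
lemma dist_int_ge {x c r : ℝ} (a : ℤ) (hx : x = a + r)
    (h1 : c ≤ r) (h2 : r ≤ 1 - c) (m : ℤ) : c ≤ |x - m| := by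
  have hxm : x - m = ((a - m : ℤ) : ℝ) + r := by rw [hx]; push_cast; ring
  rcases le_or_gt m a with h | h
  · have h0 : (0:ℝ) ≤ ((a - m : ℤ) : ℝ) := by exact_mod_cast sub_nonneg.mpr h
    have : c ≤ x - m := by rw [hxm]; linarith
    exact this.trans (le_abs_self _)
  · have h0 : ((a - m : ℤ) : ℝ) ≤ -1 := by exact_mod_cast (by omega : a - m ≤ -1)
    have : c ≤ -(x - m) := by rw [hxm]; linarith
    exact this.trans (neg_le_abs _)

lemma lower_aux (s : ℕ) (t : ℝ) (a₁ a₂ a₃ a₄ : ℤ)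
    (e₁ : t * 8 = a₁ + (4*(s:ℝ)+14)/(8*(s:ℝ)+30))
    (e₂ : t * (4*(s:ℝ)+3) = a₂ + (2*(s:ℝ)+9)/(8*(s:ℝ)+30))
    (e₃ : t * (4*(s:ℝ)+11) = a₃ + (6*(s:ℝ)+23)/(8*(s:ℝ)+30))
    (e₄ : t * (4*(s:ℝ)+19) = a₄ + (2*(s:ℝ)+7)/(8*(s:ℝ)+30)) :
    (2*(s:ℝ)+7)/(8*(s:ℝ)+30) ≤
      ⨅ i, dnn (t * (![(8 : ℝ), 4*(s:ℝ)+3, 4*(s:ℝ)+11, 4*(s:ℝ)+19]) i) := by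
  have hQ : (0:ℝ) < 8*(s:ℝ)+30 := by positivity
  have hS : (0:ℝ) ≤ (s:ℝ) := Nat.cast_nonneg s
  have hone : 1 - (2*(s:ℝ)+7)/(8*(s:ℝ)+30) = (6*(s:ℝ)+23)/(8*(s:ℝ)+30) := by
    field_simp; ring
  apply le_ciInf
  intro i
  fin_cases i
  · refine dnn_ge (dist_int_ge a₁ e₁ ((div_le_div_iff_of_pos_right hQ).mpr (by linarith)) ?_)
    rw [hone]; exact (div_le_div_iff_of_pos_right hQ).mpr (by linarith)
  · refine dnn_ge (dist_int_ge a₂ e₂ ((div_le_div_iff_of_pos_right hQ).mpr (by linarith)) ?_)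
    rw [hone]; exact (div_le_div_iff_of_pos_right hQ).mpr (by linarith)
  · refine dnn_ge (dist_int_ge a₃ e₃ ((div_le_div_iff_of_pos_right hQ).mpr (by linarith)) ?_)
    rw [hone]
  · refine dnn_ge (dist_int_ge a₄ e₄ le_rfl ?_)
    rw [hone]; exact (div_le_div_iff_of_pos_right hQ).mpr (by linarith)

lemma lower (s : ℕ) : ∃ t : ℝ, (2*(s:ℝ)+7)/(8*(s:ℝ)+30) ≤
    ⨅ i, dnn (t * (![(8 : ℝ), 4*(s:ℝ)+3, 4*(s:ℝ)+11, 4*(s:ℝ)+19]) i) := by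
  have h4 : s % 4 = 0 ∨ s % 4 = 1 ∨ s % 4 = 2 ∨ s % 4 = 3 := by omega
  obtain ⟨u, hu⟩ : ∃ u, s = 4*u + s % 4 := ⟨s/4, by omega⟩
  have hu0 : (0:ℝ) ≤ (u:ℝ) := Nat.cast_nonneg u
  rcases h4 with h | h | h | h <;> rw [h] at hu <;> subst hu
  · refine ⟨(14*(u:ℝ)+13)/(32*(u:ℝ)+30),
      lower_aux (4*u+0) _ 3 (7*(u:ℤ)+1) (7*(u:ℤ)+4) (7*(u:ℤ)+8) ?_ ?_ ?_ ?_⟩ <;>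
    · have h1 : (32*(u:ℝ)+30) ≠ 0 := by positivity
      have h2 : (8*((4*u+0 : ℕ):ℝ)+30) ≠ 0 := by positivity
      push_cast at h2 ⊢
      field_simp
      ring
  · refine ⟨(6*(u:ℝ)+7)/(32*(u:ℝ)+38),
      lower_aux (4*u+1) _ 1 (3*(u:ℤ)+1) (3*(u:ℤ)+2) (3*(u:ℤ)+4) ?_ ?_ ?_ ?_⟩ <;>
    · have h1 : (32*(u:ℝ)+38) ≠ 0 := by positivity
      have h2 : (8*((4*u+1 : ℕ):ℝ)+30) ≠ 0 := by positivity
      push_cast at h2 ⊢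
      field_simp
      ring
  · refine ⟨(30*(u:ℝ)+43)/(32*(u:ℝ)+46),
      lower_aux (4*u+2) _ 7 (15*(u:ℤ)+10) (15*(u:ℤ)+17) (15*(u:ℤ)+25) ?_ ?_ ?_ ?_⟩ <;>
    · have h1 : (32*(u:ℝ)+46) ≠ 0 := by positivity
      have h2 : (8*((4*u+2 : ℕ):ℝ)+30) ≠ 0 := by positivity
      push_cast at h2 ⊢
      field_simp
      ring
  · refine ⟨(22*(u:ℝ)+37)/(32*(u:ℝ)+54),
      lower_aux (4*u+3) _ 5 (11*(u:ℤ)+10) (11*(u:ℤ)+15) (11*(u:ℤ)+21) ?_ ?_ ?_ ?_⟩ <;>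
    · have h1 : (32*(u:ℝ)+54) ≠ 0 := by positivity
      have h2 : (8*((4*u+3 : ℕ):ℝ)+30) ≠ 0 := by positivity
      push_cast at h2 ⊢
      field_simp
      ring

lemma core_pos (s : ℕ) (θ : ℝ) (A : ℤ) (α : ℝ) (h8 : 8*θ = A + α)
    (hαl : (2*(s:ℝ)+7)/(8*(s:ℝ)+30) < α) (hαu : α ≤ 1/2) :
    ∃ (i : Fin 4) (m : ℤ),
      |θ * (![(8 : ℝ), 4*(s:ℝ)+3, 4*(s:ℝ)+11, 4*(s:ℝ)+19]) i - m| ≤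
        (2*(s:ℝ)+7)/(8*(s:ℝ)+30) := by
  have hS : (0:ℝ) ≤ (s:ℝ) := Nat.cast_nonneg s
  have hQ : (0:ℝ) < 8*(s:ℝ)+30 := by positivity
  set C : ℝ := (2*(s:ℝ)+7)/(8*(s:ℝ)+30) with hCdef
  have hCQ : C*(8*(s:ℝ)+30) = 2*(s:ℝ)+7 := by
    rw [hCdef]; field_simp
  have hC0 : 0 < C := by rw [hCdef]; positivity
  have h16 : 1/6 ≤ C := by
    rw [hCdef, le_div_iff₀ hQ]; linarith
  set B : ℤ := ⌊(4*(s:ℝ)+3)*θ⌋ with hB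
  set η : ℝ := (4*(s:ℝ)+3)*θ - B with hη
  have hη0 : 0 ≤ η := by rw [hη]; exact sub_nonneg.mpr (Int.floor_le _)
  have hη1 : η < 1 := by
    have := Int.lt_floor_add_one ((4*(s:ℝ)+3)*θ); rw [hη]; push_cast; linarith
  -- the four speed values
  have v2 : θ * (4*(s:ℝ)+3) = B + η := by rw [hη]; ring
  have v3 : θ * (4*(s:ℝ)+11) = (A+B) + (η+α) := by
    have : θ * (4*(s:ℝ)+11) = (4*(s:ℝ)+3)*θ + 8*θ := by ring
    rw [this, h8, hη]; push_cast; ring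
  have v4 : θ * (4*(s:ℝ)+19) = (2*A+B) + (η+2*α) := by
    have : θ * (4*(s:ℝ)+19) = (4*(s:ℝ)+3)*θ + 2*(8*θ) := by ring
    rw [this, h8, hη]; push_cast; ring
  rcases le_or_gt η C with h1 | h1
  · exact ⟨1, B, by
      show |θ * (4*(s:ℝ)+3) - B| ≤ C
      rw [v2, add_sub_cancel_left, abs_of_nonneg hη0]; exact h1⟩
  rcases le_or_gt (1-C) η with h2 | h2
  · refine ⟨1, B+1, ?_⟩
    show |θ * (4*(s:ℝ)+3) - (B+1:ℤ)| ≤ C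
    rw [v2]
    push_cast
    rw [show (B:ℝ) + η - (B+1) = η - 1 by ring, abs_sub_comm, abs_of_nonneg (by linarith)]
    linarith
  by_cases h3 : 1-α-C ≤ η ∧ η ≤ 1-α+C
  · refine ⟨2, A+B+1, ?_⟩
    show |θ * (4*(s:ℝ)+11) - (A+B+1:ℤ)| ≤ C
    rw [v3]; push_cast
    rw [show (A:ℝ)+B + (η+α) - (A+B+1) = η+α-1 by ring]
    rw [abs_le]; constructor <;> linarith [h3.1, h3.2]
  by_cases h4 : 1-2*α-C ≤ η ∧ η ≤ 1-2*α+C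
  · refine ⟨3, 2*A+B+1, ?_⟩
    show |θ * (4*(s:ℝ)+19) - (2*A+B+1:ℤ)| ≤ C
    rw [v4]; push_cast
    rw [show 2*(A:ℝ)+B + (η+2*α) - (2*A+B+1) = η+2*α-1 by ring]
    rw [abs_le]; constructor <;> linarith [h4.1, h4.2]
  -- now derive a contradiction
  exfalso
  push_neg at h3 h4
  have hc3 : η < 1-α-C ∨ 1-α+C < η := by
    rcases lt_or_ge η (1-α-C) with h | h
    · exact Or.inl h
    · exact Or.inr (h3 h)
  have hc4 : η < 1-2*α-C ∨ 1-2*α+C < η := by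
    rcases lt_or_ge η (1-2*α-C) with h | h
    · exact Or.inl h
    · exact Or.inr (h4 h)
  clear h3 h4
  -- integer n
  set n : ℤ := (4*(s:ℤ)+3)*A - 8*B with hn
  have hnr : (n:ℝ) = 8*η - (4*(s:ℝ)+3)*α := by
    rw [hn, hη]; push_cast
    have h8' : 8*((4*(s:ℝ)+3)*θ) = (4*(s:ℝ)+3)*((A:ℝ)+α) := by rw [← h8]; ring
    linarith [h8']
  -- scaled quantities
  have hp_l : 2*(s:ℝ)+7 < α*(8*(s:ℝ)+30) := by
    have := mul_lt_mul_of_pos_right hαl hQ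
    rw [hCdef] at this; rw [div_mul_cancel₀] at this
    · exact this
    · exact ne_of_gt hQ
  have hp_u : α*(8*(s:ℝ)+30) ≤ 4*(s:ℝ)+15 := by
    have := mul_le_mul_of_nonneg_right hαu hQ.le
    linarith
  have hg_l : 2*(s:ℝ)+7 < η*(8*(s:ℝ)+30) := by
    have := mul_lt_mul_of_pos_right h1 hQ
    linarith [hCQ]
  have hg_u : η*(8*(s:ℝ)+30) < (1-C)*(8*(s:ℝ)+30) := mul_lt_mul_of_pos_right h2 hQ
  rcases lt_or_ge α (1/2 - C) with ha | ha
  · -- case (a): G3 gap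
    have hα2C : α < 2*C := by linarith
    have hη_lt : η < 1-2*α-C := by
      rcases hc4 with h | h
      · exact h
      · rcases hc3 with h' | h'
        · linarith
        · linarith
    -- scaled
    have hpa : α*(8*(s:ℝ)+30) < 2*(s:ℝ)+8 := by
      have := mul_lt_mul_of_pos_right ha hQ
      linarith [hCQ]
    have hga : η*(8*(s:ℝ)+30) < (1-2*α-C)*(8*(s:ℝ)+30) := mul_lt_mul_of_pos_right hη_lt hQ
    have hprod1 : (4*(s:ℝ)+3)*(α*(8*(s:ℝ)+30)) < (4*(s:ℝ)+3)*(2*(s:ℝ)+8) :=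
      mul_lt_mul_of_pos_left hpa (by positivity)
    have hprod2 : (4*(s:ℝ)+19)*(2*(s:ℝ)+7) < (4*(s:ℝ)+19)*(α*(8*(s:ℝ)+30)) :=
      mul_lt_mul_of_pos_left hp_l (by positivity)
    have hnQ : (n:ℝ)*(8*(s:ℝ)+30) = 8*(η*(8*(s:ℝ)+30)) - (4*(s:ℝ)+3)*(α*(8*(s:ℝ)+30)) := by
      rw [hnr]; ring
    have hwQ : ((n+(s:ℤ)-1 : ℤ):ℝ)*(8*(s:ℝ)+30)
        = (n:ℝ)*(8*(s:ℝ)+30) + ((s:ℝ)-1)*(8*(s:ℝ)+30) := by push_cast; ring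
    have key1 : 0 < ((n+(s:ℤ)-1 : ℤ):ℝ)*(8*(s:ℝ)+30) := by
      rw [hwQ, hnQ]; linarith [hg_l, hprod1]
    have key2 : ((n+(s:ℤ)-1 : ℤ):ℝ)*(8*(s:ℝ)+30) < 4*(s:ℝ)+21 := by
      rw [hwQ, hnQ]; linarith [hga, hprod2, hCQ]
    have hw1 : 0 < n+(s:ℤ)-1 := by
      by_contra hcon
      push_neg at hcon
      have : ((n+(s:ℤ)-1 : ℤ):ℝ) ≤ 0 := by exact_mod_cast hcon
      have := mul_nonpos_iff.mpr (Or.inr ⟨this, hQ.le⟩)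
      linarith
    have hw1' : (1:ℝ) ≤ ((n+(s:ℤ)-1 : ℤ):ℝ) := by exact_mod_cast hw1
    have := le_mul_of_one_le_left hQ.le hw1'
    linarith
  · rcases le_or_gt α (2*C) with hb | hb
    · -- case (b): full covering, direct contradiction
      rcases hc4 with h | h
      · linarith
      · rcases hc3 with h' | h'
        · linarith
        · linarith
    · -- case (c)
      have hpc : 2*(2*(s:ℝ)+7) < α*(8*(s:ℝ)+30) := by
        have := mul_lt_mul_of_pos_right hb hQ
        linarith [hCQ]
      have hη_gt : 1-2*α+C < η := by
        rcases hc4 with h | h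
        · linarith
        · exact h
      have hgc : (1-2*α+C)*(8*(s:ℝ)+30) < η*(8*(s:ℝ)+30) := mul_lt_mul_of_pos_right hη_gt hQ
      have hnQ : (n:ℝ)*(8*(s:ℝ)+30) = 8*(η*(8*(s:ℝ)+30)) - (4*(s:ℝ)+3)*(α*(8*(s:ℝ)+30)) := by
        rw [hnr]; ring
      rcases hc3 with h | h
      · -- (c1): η < 1-α-C, w = n+2s
        have hgu : η*(8*(s:ℝ)+30) < (1-α-C)*(8*(s:ℝ)+30) := mul_lt_mul_of_pos_right h hQ
        have hprod6 : (4*(s:ℝ)+19)*(α*(8*(s:ℝ)+30)) ≤ (4*(s:ℝ)+19)*(4*(s:ℝ)+15) :=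
          mul_le_mul_of_nonneg_left hp_u (by positivity)
        have hprod7 : (4*(s:ℝ)+11)*(2*(2*(s:ℝ)+7)) < (4*(s:ℝ)+11)*(α*(8*(s:ℝ)+30)) :=
          mul_lt_mul_of_pos_left hpc (by positivity)
        have hwQ : ((n+2*(s:ℤ) : ℤ):ℝ)*(8*(s:ℝ)+30)
            = (n:ℝ)*(8*(s:ℝ)+30) + (2*(s:ℝ))*(8*(s:ℝ)+30) := by push_cast; ring
        have key1 : 0 < ((n+2*(s:ℤ) : ℤ):ℝ)*(8*(s:ℝ)+30) := by
          rw [hwQ, hnQ]; linarith [hgc, hprod6, hCQ]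
        have key2 : ((n+2*(s:ℤ) : ℤ):ℝ)*(8*(s:ℝ)+30) < 8*(s:ℝ)+30 := by
          rw [hwQ, hnQ]; linarith [hgu, hprod7, hCQ]
        have hw1 : 0 < n+2*(s:ℤ) := by
          by_contra hcon
          push_neg at hcon
          have : ((n+2*(s:ℤ) : ℤ):ℝ) ≤ 0 := by exact_mod_cast hcon
          have := mul_nonpos_iff.mpr (Or.inr ⟨this, hQ.le⟩)
          linarith
        have hw1' : (1:ℝ) ≤ ((n+2*(s:ℤ) : ℤ):ℝ) := by exact_mod_cast hw1
        have := le_mul_of_one_le_left hQ.le hw1'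
        linarith
      · -- (c2): 1-α+C < η, w = n+2s-4
        have hgl2 : (1-α+C)*(8*(s:ℝ)+30) < η*(8*(s:ℝ)+30) := mul_lt_mul_of_pos_right h hQ
        have hprod8 : (4*(s:ℝ)+11)*(α*(8*(s:ℝ)+30)) ≤ (4*(s:ℝ)+11)*(4*(s:ℝ)+15) :=
          mul_le_mul_of_nonneg_left hp_u (by positivity)
        have hprod9 : (4*(s:ℝ)+3)*(2*(2*(s:ℝ)+7)) < (4*(s:ℝ)+3)*(α*(8*(s:ℝ)+30)) :=
          mul_lt_mul_of_pos_left hpc (by positivity)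
        have hwQ : ((n+2*(s:ℤ)-4 : ℤ):ℝ)*(8*(s:ℝ)+30)
            = (n:ℝ)*(8*(s:ℝ)+30) + (2*(s:ℝ)-4)*(8*(s:ℝ)+30) := by push_cast; ring
        have key1 : 0 < ((n+2*(s:ℤ)-4 : ℤ):ℝ)*(8*(s:ℝ)+30) := by
          rw [hwQ, hnQ]; linarith [hgl2, hprod8, hCQ]
        have key2 : ((n+2*(s:ℤ)-4 : ℤ):ℝ)*(8*(s:ℝ)+30) < 8*(s:ℝ)+22 := by
          rw [hwQ, hnQ]; linarith [hg_u, hprod9, hCQ]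
        have hw1 : 0 < n+2*(s:ℤ)-4 := by
          by_contra hcon
          push_neg at hcon
          have : ((n+2*(s:ℤ)-4 : ℤ):ℝ) ≤ 0 := by exact_mod_cast hcon
          have := mul_nonpos_iff.mpr (Or.inr ⟨this, hQ.le⟩)
          linarith
        have hw1' : (1:ℝ) ≤ ((n+2*(s:ℤ)-4 : ℤ):ℝ) := by exact_mod_cast hw1
        have := le_mul_of_one_le_left hQ.le hw1'
        linarith

lemma dnn_nonneg (x : ℝ) : 0 ≤ dnn x := le_ciInf fun m => abs_nonneg _
lemma dnn_le (x : ℝ) (m : ℤ) : dnn x ≤ |x - m| := ciInf_le (dnn_bdd x) m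

lemma core_all (s : ℕ) (θ : ℝ) :
    ∃ (i : Fin 4) (m : ℤ),
      |θ * (![(8 : ℝ), 4*(s:ℝ)+3, 4*(s:ℝ)+11, 4*(s:ℝ)+19]) i - m| ≤
        (2*(s:ℝ)+7)/(8*(s:ℝ)+30) := by
  set C : ℝ := (2*(s:ℝ)+7)/(8*(s:ℝ)+30) with hCdef
  set A : ℤ := round (8*θ) with hA
  set α : ℝ := 8*θ - A with hα
  have h8 : 8*θ = A + α := by rw [hα]; ring
  have habs : |α| ≤ 1/2 := by rw [hα, hA]; exact abs_sub_round _
  rcases le_or_gt (|α|) C with h | h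
  · refine ⟨0, A, ?_⟩
    show |θ * 8 - A| ≤ C
    rw [show θ * 8 - (A:ℝ) = α by rw [hα]; ring]
    exact h
  · rcases le_or_gt 0 α with hpos | hneg
    · have : C < α := by rwa [abs_of_nonneg hpos] at h
      exact core_pos s θ A α h8 this (by rw [abs_of_nonneg hpos] at habs; exact habs)
    · have h8' : 8*(-θ) = (-A : ℤ) + (-α) := by push_cast; linarith [h8]
      have hl : C < -α := by rwa [abs_of_neg hneg] at h
      have hu : -α ≤ 1/2 := by rw [abs_of_neg hneg] at habs; exact habs
      obtain ⟨i, m, him⟩ := core_pos s (-θ) (-A) (-α) h8' hl hu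
      refine ⟨i, -m, ?_⟩
      have : θ * (![(8 : ℝ), 4*(s:ℝ)+3, 4*(s:ℝ)+11, 4*(s:ℝ)+19]) i - ((-m : ℤ):ℝ)
          = -((-θ) * (![(8 : ℝ), 4*(s:ℝ)+3, 4*(s:ℝ)+11, 4*(s:ℝ)+19]) i - (m:ℝ)) := by
        push_cast; ring
      rw [this, abs_neg]
      exact him

theorem stmt_0 (s : ℕ) :
    ML ![(8 : ℝ), 4 * (s : ℝ) + 3, 4 * (s : ℝ) + 11, 4 * (s : ℝ) + 19] =
      (2 * (s : ℝ) + 7) / (8 * (s : ℝ) + 30) := by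
  have hub : ∀ t : ℝ,
      (⨅ i, dnn (t * (![(8 : ℝ), 4*(s:ℝ)+3, 4*(s:ℝ)+11, 4*(s:ℝ)+19]) i)) ≤
        (2*(s:ℝ)+7)/(8*(s:ℝ)+30) := by
    intro t
    obtain ⟨i, m, him⟩ := core_all s t
    calc (⨅ i, dnn (t * (![(8 : ℝ), 4*(s:ℝ)+3, 4*(s:ℝ)+11, 4*(s:ℝ)+19]) i))
        ≤ dnn (t * (![(8 : ℝ), 4*(s:ℝ)+3, 4*(s:ℝ)+11, 4*(s:ℝ)+19]) i) := by
          refine ciInf_le ⟨0, ?_⟩ i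
          rintro x ⟨j, rfl⟩; exact dnn_nonneg _
      _ ≤ |t * (![(8 : ℝ), 4*(s:ℝ)+3, 4*(s:ℝ)+11, 4*(s:ℝ)+19]) i - m| := dnn_le _ m
      _ ≤ (2*(s:ℝ)+7)/(8*(s:ℝ)+30) := him
  unfold ML
  apply le_antisymm
  · exact ciSup_le hub
  · obtain ⟨t₀, ht₀⟩ := lower s
    have hb : BddAbove (Set.range fun t : ℝ =>
        ⨅ i, dnn (t * (![(8 : ℝ), 4*(s:ℝ)+3, 4*(s:ℝ)+11, 4*(s:ℝ)+19]) i)) :=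
      ⟨(2*(s:ℝ)+7)/(8*(s:ℝ)+30), by rintro x ⟨t, rfl⟩; exact hub t⟩
    exact le_trans ht₀ (le_ciSup hb t₀)
end

section
/- For every real number t, min(‖t + 1/2‖, ‖2t‖, ‖3t + 1/2‖) ≤ 1/4. -/
theorem stmt_3 (t : ℝ) :
    min (dnn (t + 1 / 2)) (min (dnn (2 * t)) (dnn (3 * t + 1 / 2))) ≤ 1 / 4 := by
  have h := abs_sub_round t
  rw [abs_le] at h
  obtain ⟨h1, h2⟩ := h
  set n : ℤ := round t with hn
  rcases le_or_gt (t - n) (-(1/4)) with hc | hc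
  · refine le_trans (min_le_left _ _) (le_trans (dnn_le _ n) ?_)
    rw [abs_le]; constructor <;> linarith
  rcases le_or_gt (t - n) (-(1/8)) with hc2 | hc2
  · refine le_trans (min_le_right _ _) (le_trans (min_le_right _ _)
      (le_trans (dnn_le _ (3 * n)) ?_))
    rw [abs_le]; push_cast; constructor <;> linarith
  rcases le_or_gt (t - n) (1/8) with hc3 | hc3
  · refine le_trans (min_le_right _ _) (le_trans (min_le_left _ _)
      (le_trans (dnn_le _ (2 * n)) ?_))
    rw [abs_le]; push_cast; constructor <;> linarith
  rcases le_or_gt (t - n) (1/4) with hc4 | hc4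
  · refine le_trans (min_le_right _ _) (le_trans (min_le_right _ _)
      (le_trans (dnn_le _ (3 * n + 1)) ?_))
    rw [abs_le]; push_cast; constructor <;> linarith
  · refine le_trans (min_le_left _ _) (le_trans (dnn_le _ (n + 1)) ?_)
    rw [abs_le]; push_cast; constructor <;> linarith
end

section
/- (Two Very Fast Runners) Let n ≥ 4 and let v₁ < v₂ < ⋯ < vₙ be positive integers such that ML(v₁, …, v_{n−2}) ≥ L for some real number L. If L − 3v_{n−2}/(n·v_{n−1}) ≥ 1/n, then ML(v₁, …, vₙ) ≥ 1/n. -/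
lemma le_dnn {x c : ℝ} (h : ∀ m : ℤ, c ≤ |x - (m : ℝ)|) : c ≤ dnn x := le_ciInf h

lemma dnn_le_half (x : ℝ) : dnn x ≤ 1/2 :=
  (dnn_le x (round x)).trans (abs_sub_round x)

lemma dnn_lipschitz (x y : ℝ) : dnn y - |x - y| ≤ dnn x := by
  apply le_dnn
  intro m
  have h1 := dnn_le y m
  have h2 : |y - (m:ℝ)| ≤ |y - x| + |x - (m:ℝ)| := abs_sub_le y x m
  have h3 : |x - y| = |y - x| := abs_sub_comm x y
  linarith

lemma dnn_ge_s4 {x d : ℝ} {m : ℤ} (hd : 0 ≤ d) (h1 : (m:ℝ) + d ≤ x)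
    (h2 : x ≤ (m:ℝ) + 1 - d) : d ≤ dnn x := by
  apply le_dnn
  intro k
  rcases le_or_gt (k:ℝ) (m:ℝ) with hk | hk
  · have : d ≤ x - k := by linarith
    exact this.trans (le_abs_self _)
  · have hk' : (m:ℝ) + 1 ≤ (k:ℝ) := by
      have : m < k := by exact_mod_cast hk
      exact_mod_cast Int.lt_iff_add_one_le.mp this
    have h3 : d ≤ (k:ℝ) - x := by linarith
    calc d ≤ (k:ℝ) - x := h3
      _ ≤ |x - (k:ℝ)| := by rw [abs_sub_comm]; exact le_abs_self _

lemma dnn_mem {x d : ℝ} (h : d ≤ dnn x) :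
    ∃ m : ℤ, (m:ℝ) + d ≤ x ∧ x ≤ (m:ℝ) + 1 - d := by
  refine ⟨⌊x⌋, ?_, ?_⟩
  · have h1 := h.trans (dnn_le x ⌊x⌋)
    rw [abs_of_nonneg (by linarith [Int.floor_le x])] at h1
    linarith
  · have h2 := h.trans (dnn_le x (⌊x⌋ + 1))
    have hx : x - ((⌊x⌋ : ℤ) + 1 : ℤ) ≤ 0 := by
      push_cast
      linarith [Int.lt_floor_add_one x]
    rw [abs_of_nonpos hx] at h2
    push_cast at h2 ⊢
    linarith

lemma exists_good_two (d x₀ : ℝ) (hd : 0 < d) (hd2 : d ≤ 1/2) :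
    ∃ y : ℝ, |y - x₀| ≤ d ∧ d ≤ dnn y := by
  have h1 : ((⌊x₀⌋ : ℤ) : ℝ) ≤ x₀ := Int.floor_le x₀
  have h2 : x₀ < (⌊x₀⌋ : ℤ) + 1 := Int.lt_floor_add_one x₀
  rcases lt_or_ge x₀ ((⌊x₀⌋ : ℤ) + d) with h | h
  · exact ⟨(⌊x₀⌋ : ℤ) + d, abs_le.mpr ⟨by linarith, by linarith⟩,
      dnn_ge_s4 hd.le le_rfl (by linarith)⟩
  rcases le_or_gt x₀ ((⌊x₀⌋ : ℤ) + 1 - d) with h' | h'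
  · exact ⟨x₀, by simp [hd.le], dnn_ge_s4 hd.le h h'⟩
  · exact ⟨(⌊x₀⌋ : ℤ) + 1 - d, abs_le.mpr ⟨by linarith, by linarith⟩,
      dnn_ge_s4 hd.le (by linarith) (by linarith)⟩

lemma exists_good_one (d x₀ : ℝ) (hd : 0 < d) (hd2 : d ≤ 1/2) :
    ∃ y : ℝ, x₀ ≤ y ∧ y ≤ x₀ + 2*d ∧ d ≤ dnn y := by
  have h1 : ((⌊x₀⌋ : ℤ) : ℝ) ≤ x₀ := Int.floor_le x₀
  have h2 : x₀ < (⌊x₀⌋ : ℤ) + 1 := Int.lt_floor_add_one x₀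
  rcases le_or_gt x₀ ((⌊x₀⌋ : ℤ) + 1 - d) with h | h
  · refine ⟨max x₀ ((⌊x₀⌋ : ℤ) + d), le_max_left _ _,
      max_le (by linarith) (by linarith), dnn_ge_s4 hd.le (le_max_right _ _)
        (max_le h (by linarith))⟩
  · refine ⟨((⌊x₀⌋ : ℤ) : ℝ) + 1 + d, by linarith, by linarith,
      dnn_ge_s4 (m := ⌊x₀⌋ + 1) hd.le (by push_cast; linarith) (by push_cast; linarith)⟩

lemma two_fast (n : ℕ) (hn : 4 ≤ n) (u w : ℕ) (hu : 0 < u) (huw : u ≤ w) (t₀ : ℝ) :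
    ∃ t : ℝ, |t - t₀| ≤ 3 / ((n:ℝ) * u) ∧ 1/(n:ℝ) ≤ dnn (t * u) ∧ 1/(n:ℝ) ≤ dnn (t * w) := by
  have hn' : (4:ℝ) ≤ n := by exact_mod_cast hn
  have hnpos : (0:ℝ) < n := by linarith
  have hupos : (0:ℝ) < u := by exact_mod_cast hu
  have huw' : (u:ℝ) ≤ w := by exact_mod_cast huw
  have hwpos : (0:ℝ) < w := lt_of_lt_of_le hupos huw'
  set d : ℝ := 1/(n:ℝ) with hddef
  have hd : 0 < d := by positivity
  have hd4 : 4 * d ≤ 1 := by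
    rw [hddef, show (4:ℝ) * (1/n) = 4/n by ring, div_le_one hnpos]
    exact hn'
  have hd2 : d ≤ 1/2 := by linarith
  obtain ⟨y, hy1, hy2⟩ := exists_good_two d (t₀ * u) hd hd2
  obtain ⟨m, hm1, hm2⟩ := dnn_mem hy2
  set a : ℝ := y / u with hadef
  have hau : a * u = y := div_mul_cancel₀ y hupos.ne'
  have hat : |a - t₀| ≤ d / u := by
    have heq : a - t₀ = (y - t₀ * u) / u := by rw [hadef]; field_simp
    rw [heq, abs_div, abs_of_pos hupos]
    gcongr
  set gl : ℝ := ((m:ℝ) + d) / u with hgldef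
  set gr : ℝ := ((m:ℝ) + 1 - d) / u with hgrdef
  have hglu : gl * u = (m:ℝ) + d := div_mul_cancel₀ _ hupos.ne'
  have hgru : gr * u = (m:ℝ) + 1 - d := div_mul_cancel₀ _ hupos.ne'
  have hga : gl ≤ a := by rw [hgldef, hadef]; gcongr
  have hag : a ≤ gr := by rw [hgrdef, hadef]; gcongr
  set l : ℝ := 2*d / w with hldef
  have hl0 : 0 ≤ l := by positivity
  have hlw : l * w = 2*d := div_mul_cancel₀ _ hwpos.ne'
  have hGlen : gl + l ≤ gr := by
    have key : 2*d*u ≤ (1 - 2*d)*w := by nlinarith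
    have h1 : l ≤ (1 - 2*d)/u := by
      rw [hldef, div_le_div_iff₀ hwpos hupos]
      nlinarith
    have h2 : gr - gl = (1 - 2*d)/u := by
      rw [hgrdef, hgldef, div_sub_div_same]; ring_nf
    linarith
  set jl : ℝ := min a (gr - l) with hjldef
  have hjl1 : jl ≤ a := min_le_left _ _
  have hjla : a - l ≤ jl := le_min (by linarith) (by linarith)
  have hjlgl : gl ≤ jl := le_min hga (by linarith)
  have hjr : jl + l ≤ gr := by
    have := min_le_right a (gr - l)
    linarith
  obtain ⟨y₂, hy21, hy22, hy23⟩ := exists_good_one d (jl * w) hd hd2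
  set t : ℝ := y₂ / w with htdef
  have htw : t * w = y₂ := div_mul_cancel₀ _ hwpos.ne'
  have htJ1 : jl ≤ t := by
    rw [htdef, le_div_iff₀ hwpos]
    exact hy21
  have htJ2 : t ≤ jl + l := by
    rw [htdef, div_le_iff₀ hwpos]
    have : (jl + l) * w = jl * w + 2*d := by rw [add_mul, hlw]
    linarith
  refine ⟨t, ?_, ?_, ?_⟩
  · have h1 : |t - a| ≤ l := abs_le.mpr ⟨by linarith, by linarith⟩
    have h2 : l ≤ 2*d/u := by rw [hldef]; gcongr
    have h3 : (3:ℝ)/((n:ℝ)*u) = 3*d/u := by rw [hddef]; field_simp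
    calc |t - t₀| ≤ |t - a| + |a - t₀| := abs_sub_le t a t₀
      _ ≤ 2*d/u + d/u := add_le_add (h1.trans h2) hat
      _ = 3*d/u := by ring
      _ = 3/((n:ℝ)*u) := h3.symm
  · have ht1 : gl ≤ t := le_trans hjlgl htJ1
    have ht2 : t ≤ gr := le_trans htJ2 hjr
    refine dnn_ge_s4 (m := m) hd.le ?_ ?_
    · have := mul_le_mul_of_nonneg_right ht1 hupos.le
      rw [hglu] at this
      linarith
    · have := mul_le_mul_of_nonneg_right ht2 hupos.le
      rw [hgru] at this
      linarith
  · rw [htw]; exact hy23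

theorem stmt_4 (n : ℕ) (hn : 4 ≤ n) (v : Fin n → ℕ)
    (hpos : ∀ i, 0 < v i) (hmono : StrictMono v) (L : ℝ)
    (hL : ML (fun i : Fin (n - 2) => (v (Fin.castLE (by omega) i) : ℝ)) ≥ L)
    (hcond : L - 3 * (v ⟨n - 3, by omega⟩ : ℝ) / ((n : ℝ) * (v ⟨n - 2, by omega⟩ : ℝ))
      ≥ 1 / (n : ℝ)) :
    ML (fun i => (v i : ℝ)) ≥ 1 / (n : ℝ) := by
  have hn3 : n - 3 < n := by omega
  have hn2 : n - 2 < n := by omega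
  have hn1 : n - 1 < n := by omega
  have hle : n - 2 ≤ n := by omega
  have hne2 : Nonempty (Fin (n-2)) := ⟨⟨0, by omega⟩⟩
  have hnen : Nonempty (Fin n) := ⟨⟨0, by omega⟩⟩
  have hn' : (4:ℝ) ≤ n := by exact_mod_cast hn
  have hnpos : (0:ℝ) < n := by linarith
  set i3 : Fin n := ⟨n-3, hn3⟩
  set i2 : Fin n := ⟨n-2, hn2⟩
  set i1 : Fin n := ⟨n-1, hn1⟩
  have hcond' : 1/(n:ℝ) ≤ L - 3 * (v i3 : ℝ) / ((n:ℝ) * (v i2 : ℝ)) := hcond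
  have hL' : L ≤ ⨆ t : ℝ, ⨅ i : Fin (n-2), dnn (t * (v (Fin.castLE hle i) : ℝ)) := hL
  have hupos : (0:ℝ) < (v i2 : ℝ) := by exact_mod_cast hpos i2
  -- boundedness facts
  have hbddAbove : BddAbove (Set.range fun t : ℝ => ⨅ i : Fin n, dnn (t * (v i : ℝ))) := by
    refine ⟨1/2, ?_⟩
    rintro x ⟨t, rfl⟩
    exact le_trans (ciInf_le (Set.finite_range _).bddBelow ⟨0, by omega⟩) (dnn_le_half _)
  rw [ge_iff_le]
  have key : ∀ ε : ℝ, 0 < ε → 1/(n:ℝ) ≤ ML (fun i => (v i : ℝ)) + ε := by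
    intro ε hε
    obtain ⟨t₀, ht₀⟩ := exists_lt_of_lt_ciSup (lt_of_lt_of_le (by linarith : L - ε < L) hL')
    obtain ⟨t, htd, htu, htw⟩ := two_fast n hn (v i2) (v i1) (hpos i2) (le_of_lt
      (hmono (show i2 < i1 by rw [Fin.lt_def]; show n - 2 < n - 1; omega))) t₀
    have hmin : 1/(n:ℝ) - ε ≤ ⨅ i : Fin n, dnn (t * (v i : ℝ)) := by
      apply le_ciInf
      intro i
      by_cases hi : (i : ℕ) < n - 2
      · -- slow runner
        have hic : Fin.castLE hle (⟨(i:ℕ), hi⟩ : Fin (n-2)) = i := Fin.ext rfl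
        have h1 : L - ε < dnn (t₀ * (v i : ℝ)) := by
          have h := ciInf_le (f := fun j : Fin (n-2) => dnn (t₀ * (v (Fin.castLE hle j) : ℝ)))
            (Set.finite_range _).bddBelow (⟨(i:ℕ), hi⟩ : Fin (n-2))
          rw [hic] at h
          exact lt_of_lt_of_le ht₀ h
        have h2 : dnn (t₀ * (v i : ℝ)) - |t * (v i : ℝ) - t₀ * (v i : ℝ)| ≤ dnn (t * (v i : ℝ)) :=
          dnn_lipschitz _ _
        have hviV : (v i : ℝ) ≤ (v i3 : ℝ) := by
          exact_mod_cast hmono.monotone (show i ≤ i3 by rw [Fin.le_def]; show (i:ℕ) ≤ n - 3; omega)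
        have h3 : |t * (v i : ℝ) - t₀ * (v i : ℝ)| ≤ 3 / ((n:ℝ) * (v i2 : ℝ)) * (v i3 : ℝ) := by
          rw [← sub_mul, abs_mul, abs_of_nonneg (by positivity : (0:ℝ) ≤ (v i : ℝ))]
          exact mul_le_mul htd hviV (by positivity) (by positivity)
        have h4 : 3 / ((n:ℝ) * (v i2 : ℝ)) * (v i3 : ℝ) = 3 * (v i3 : ℝ) / ((n:ℝ) * (v i2 : ℝ)) := by
          ring
        linarith
      · -- fast runners
        have : (i : ℕ) = n - 2 ∨ (i : ℕ) = n - 1 := by omega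
        rcases this with h | h
        · have : i = i2 := Fin.ext (by simpa using h)
          rw [this]
          linarith
        · have : i = i1 := Fin.ext (by simpa using h)
          rw [this]
          linarith
    have hML : (⨅ i : Fin n, dnn (t * (v i : ℝ))) ≤ ML (fun i => (v i : ℝ)) :=
      le_ciSup hbddAbove t
    linarith
  linarith [le_of_forall_pos_le_add key]
end

section
/- Let v₁, v₂, v₃, v₄ be positive integers with gcd(v₁, v₂, v₃, v₄) = 1. If some three of the four speeds share a common factor g ≥ 2 (i.e., the gcd of some three of the speeds is at least 2), then ML(v₁, v₂, v₃, v₄) ≥ 1/4. -/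
def Good (x : ℝ) : Prop := ∃ n : ℤ, 1/4 ≤ x - n ∧ x - n ≤ 3/4

lemma good_dnn {x : ℝ} (h : Good x) : 1/4 ≤ dnn x := by
  obtain ⟨n, h1, h2⟩ := h
  refine le_ciInf fun m => ?_
  rcases le_or_gt (m : ℤ) n with hm | hm
  · have : (m:ℝ) ≤ (n:ℝ) := by exact_mod_cast hm
    calc (1:ℝ)/4 ≤ x - n := h1
    _ ≤ x - m := by linarith
    _ ≤ |x - m| := le_abs_self _
  · have : (n:ℝ) + 1 ≤ (m:ℝ) := by exact_mod_cast hm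
    calc (1:ℝ)/4 ≤ -(x - m) := by linarith
    _ ≤ |x - m| := neg_le_abs _

lemma good_shift {x : ℝ} (h : Good x) (k : ℤ) : Good (x + k) := by
  obtain ⟨n, h1, h2⟩ := h
  exact ⟨n + k, by push_cast; constructor <;> linarith⟩

lemma good_or (x : ℝ) : Good x ∨ Good (x + 1/2) := by
  set n : ℤ := ⌊x + 1/4⌋ with hn
  have h1 : (n:ℝ) ≤ x + 1/4 := Int.floor_le _
  have h2 : x + 1/4 < n + 1 := Int.lt_floor_add_one _
  rcases le_or_gt (1/4 : ℝ) (x - n) with h | h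
  · exact Or.inl ⟨n, h, by linarith⟩
  · exact Or.inr ⟨n, by constructor <;> linarith⟩

lemma good_div {p q : ℤ} (hq : 0 < q) (h1 : q ≤ 4 * (p % q)) (h2 : 4 * (p % q) ≤ 3 * q) :
    Good ((p : ℝ) / (q : ℝ)) := by
  have hq' : (0:ℝ) < (q:ℝ) := by exact_mod_cast hq
  have key : (p:ℝ)/q - ((p/q : ℤ):ℝ) = ((p % q : ℤ):ℝ)/(q:ℝ) := by
    rw [Int.emod_def]; push_cast; field_simp
  have hr1 : (q:ℝ) ≤ 4 * ((p % q : ℤ):ℝ) := by exact_mod_cast h1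
  have hr2 : 4 * ((p % q : ℤ):ℝ) ≤ 3 * (q:ℝ) := by exact_mod_cast h2
  refine ⟨p / q, ?_, ?_⟩ <;> rw [key]
  · rw [le_div_iff₀ hq']; linarith
  · rw [div_le_iff₀ hq']; linarith

lemma good_spaced (z γ : ℝ) (h0 : 0 < γ) (h2 : γ ≤ 1/2) : ∃ j : ℤ, Good (z + j * γ) := by
  refine ⟨⌈(1/4 - z)/γ⌉, 0, ?_, ?_⟩ <;> push_cast
  · have := Int.le_ceil ((1/4 - z)/γ)
    rw [div_le_iff₀ h0] at this; linarith
  · have h3 : (⌈(1/4 - z)/γ⌉ : ℝ) < (1/4 - z)/γ + 1 := Int.ceil_lt_add_one _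
    have hx : ((1/4 - z)/γ)*γ = 1/4 - z := div_mul_cancel₀ _ h0.ne'
    nlinarith

lemma good_congr {x y : ℝ} (h : x = y) (hy : Good y) : Good x := h ▸ hy

lemma good_half : Good (1/2 : ℝ) := ⟨0, by norm_num⟩

lemma good_half_nat (d : ℕ) (hd : d % 2 = 1) : Good ((1/2 : ℝ) * d) := by
  have h2 : ((d:ℤ)) % 2 = 1 := by omega
  exact good_congr (y := ((d:ℤ):ℝ)/((2:ℤ):ℝ)) (by push_cast; ring)
    (good_div (by norm_num) (by omega) (by omega))

lemma cast_eq_of_nat {a b : ℕ} (h : a = b) : (a:ℝ) = (b:ℝ) := by exact_mod_cast h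

-- mixed two-runner: d odd, second speed 2*e'
lemma two_run_mixed (d e' : ℕ) (hd : d % 2 = 1) (he' : 0 < e') :
    ∃ s : ℝ, Good (s * d) ∧ Good (s * (2*e')) := by
  have he : ((e' : ℝ)) ≠ 0 := by positivity
  set x : ℝ := (d : ℝ)/(4*e') with hx
  rcases good_or x with h | h
  · refine ⟨1/(4*e'), good_congr (by rw [hx]; ring) h, good_congr ?_ good_half⟩
    push_cast; field_simp; ring
  · obtain ⟨r, hr⟩ : ∃ r : ℕ, d = 2*r+1 := ⟨d/2, by omega⟩
    have hdr : (d:ℝ) = 2*r+1 := by exact_mod_cast cast_eq_of_nat hr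
    refine ⟨1/(4*e') + 1/2, ?_, ?_⟩
    · refine good_congr (y := (x + 1/2) + (r:ℤ)) ?_ (good_shift h r)
      push_cast [hx]; rw [hdr]; field_simp; ring
    · refine good_congr (y := (1/2 : ℝ) + (e' : ℤ)) ?_ (good_shift good_half e')
      push_cast; field_simp; ring

lemma two_run : ∀ (n d e : ℕ), d + e ≤ n → 0 < d → 0 < e →
    ∃ s : ℝ, Good (s * d) ∧ Good (s * e) := by
  intro n
  induction n with
  | zero => intro d e h hd he; omega
  | succ n ih =>
    intro d e h hd he
    rcases Nat.mod_two_eq_zero_or_one d with hd2 | hd2 <;>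
      rcases Nat.mod_two_eq_zero_or_one e with he2 | he2
    · -- both even
      obtain ⟨s, h1, h2⟩ := ih (d/2) (e/2) (by omega) (by omega) (by omega)
      refine ⟨s/2, good_congr ?_ h1, good_congr ?_ h2⟩
      · rw [cast_eq_of_nat (show d = 2*(d/2) by omega)]; push_cast; ring
      · rw [cast_eq_of_nat (show e = 2*(e/2) by omega)]; push_cast; ring
    · -- d even, e odd
      obtain ⟨s, h1, h2⟩ := two_run_mixed e (d/2) he2 (by omega)
      refine ⟨s, good_congr ?_ h2, h1⟩
      rw [cast_eq_of_nat (show d = 2*(d/2) by omega)]; push_cast; ring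
    · -- d odd, e even
      obtain ⟨s, h1, h2⟩ := two_run_mixed d (e/2) hd2 (by omega)
      refine ⟨s, h1, good_congr ?_ h2⟩
      rw [cast_eq_of_nat (show e = 2*(e/2) by omega)]; push_cast; ring
    · exact ⟨1/2, good_half_nat d hd2, good_half_nat e he2⟩

lemma one_odd (a b c : ℕ) (ha : a % 2 = 1) (hb : b % 2 = 0) (hc : c % 2 = 0)
    (hbp : 0 < b) (hcp : 0 < c) :
    ∃ t : ℝ, Good (t*a) ∧ Good (t*b) ∧ Good (t*c) := by
  obtain ⟨b', hb'⟩ : ∃ b', b = 2*b' := ⟨b/2, by omega⟩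
  obtain ⟨c', hc'⟩ : ∃ c', c = 2*c' := ⟨c/2, by omega⟩
  obtain ⟨s, h1, h2⟩ := two_run (b' + c') b' c' le_rfl (by omega) (by omega)
  have hbe : (b:ℝ) = 2*(b':ℕ) := by exact_mod_cast cast_eq_of_nat hb'
  have hce : (c:ℝ) = 2*(c':ℕ) := by exact_mod_cast cast_eq_of_nat hc'
  set x : ℝ := s * a / 2 with hx
  rcases good_or x with h | h
  · exact ⟨s/2, good_congr (by rw [hx]; ring) h,
      good_congr (by rw [hbe]; ring) h1, good_congr (by rw [hce]; ring) h2⟩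
  · obtain ⟨r, hr⟩ : ∃ r : ℕ, a = 2*r+1 := ⟨a/2, by omega⟩
    have har : (a:ℝ) = 2*r+1 := by exact_mod_cast cast_eq_of_nat hr
    refine ⟨(s+1)/2, ?_, ?_, ?_⟩
    · refine good_congr (y := (x + 1/2) + (r:ℤ)) ?_ (good_shift h r)
      push_cast [hx]; rw [har]; ring
    · refine good_congr (y := s * (b':ℕ) + ((b':ℕ) : ℤ)) ?_ (good_shift h1 _)
      rw [hbe]; push_cast; ring
    · refine good_congr (y := s * (c':ℕ) + ((c':ℕ) : ℤ)) ?_ (good_shift h2 _)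
      rw [hce]; push_cast; ring

lemma pinA (a b c' : ℕ) (ha : a % 2 = 1) (hb : b % 2 = 1) (hce : c' % 2 = 0)
    (hap : 0 < a) (hbp : 0 < b) (hcp : 0 < c') (hnd : ¬ (a ∣ c')) :
    ∃ t : ℝ, Good (t*a) ∧ Good (t*b) ∧ Good (t*(2*c')) := by
  set h := Nat.gcd a c' with hdef
  have hh : 0 < h := Nat.gcd_pos_of_pos_left _ hap
  have hha : h ∣ a := Nat.gcd_dvd_left _ _
  have hhc : h ∣ c' := Nat.gcd_dvd_right _ _
  set a₂ := a / h with ha2def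
  set c₂ := c' / h with hc2def
  have haa : h * a₂ = a := Nat.mul_div_cancel' hha
  have hcc : h * c₂ = c' := Nat.mul_div_cancel' hhc
  have hcop : Nat.Coprime a₂ c₂ := Nat.coprime_div_gcd_div_gcd hh
  have hodd : h % 2 = 1 := by
    rcases Nat.mod_two_eq_zero_or_one h with h0 | h1
    · exfalso
      have : (2:ℕ) ∣ a := dvd_trans (Nat.dvd_of_mod_eq_zero h0) hha
      omega
    · exact h1
  have hc2e : c₂ % 2 = 0 := by
    have hm := Nat.mul_mod h c₂ 2
    rw [hodd, one_mul] at hm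
    omega
  have ha2o : a₂ % 2 = 1 := by
    have hm := Nat.mul_mod h a₂ 2
    rw [hodd, one_mul] at hm
    omega
  have ha2 : 2 ≤ a₂ := by
    rcases Nat.lt_or_ge a₂ 2 with h2 | h2
    · interval_cases a₂
      · omega
      · exact absurd (haa ▸ (by simpa using hhc) : a ∣ c') hnd
    · exact h2
  set c₃ := c₂ / 2 with hc3def
  set j := (a₂ + 3) / 4 with hjdef
  have hj1 : a₂ ≤ 4*j ∧ 4*j ≤ a₂ + 3 ∧ j < a₂ := by
    have := Nat.div_add_mod (a₂ + 3) 4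
    have := Nat.mod_lt (a₂ + 3) (show 0 < 4 by norm_num)
    omega
  -- Bezout
  have hg1 : Nat.gcd c₂ a₂ = 1 := (Nat.coprime_comm.mp hcop)
  have hbez : (c₂:ℤ) * Nat.gcdA c₂ a₂ + (a₂:ℤ) * Nat.gcdB c₂ a₂ = 1 := by
    have := Nat.gcd_eq_gcd_ab c₂ a₂
    rw [hg1] at this
    push_cast at this
    linarith
  set u := Nat.gcdA c₂ a₂
  set v := Nat.gcdB c₂ a₂
  set m : ℤ := ((j:ℤ) - c₃) * u with hmdef
  set y : ℤ := -(((j:ℤ) - c₃) * v) with hydef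
  have hmc : m * c₂ = ((j:ℤ) - c₃) + a₂ * y := by
    rw [hmdef, hydef]; linear_combination ((j:ℤ) - (c₃:ℤ)) * hbez
  have hC2 : (c₂:ℤ) = 2*c₃ := by omega
  have hA : (a:ℤ) = h * a₂ := by exact_mod_cast congrArg (Nat.cast : ℕ → ℤ) haa.symm
  have hC : (c':ℤ) = h * c₂ := by exact_mod_cast congrArg (Nat.cast : ℕ → ℤ) hcc.symm
  have key : (2*m+1) * (c' : ℤ) = 2*(h*j : ℤ) + (2*(a:ℤ)) * y := by
    rw [hC, hA] at *
    rw [hC2] at hmc ⊢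
    linear_combination 2*(h:ℤ)*hmc
  have hn : h*j + h ≤ a := by
    rw [← haa]
    have h1 : j+1 ≤ a₂ := hj1.2.2
    calc h*j + h = h*(j+1) := by ring
    _ ≤ h*a₂ := Nat.mul_le_mul_left h h1
  have hlow : a ≤ 4*(h*j) := by
    calc a = h*a₂ := haa.symm
    _ ≤ h*(4*j) := Nat.mul_le_mul_left h hj1.1
    _ = 4*(h*j) := by ring
  have hhigh : 4*(h*j) ≤ 3*a := by
    have h4 : 4*j ≤ 3*a₂ := by omega
    calc 4*(h*j) = h*(4*j) := by ring
    _ ≤ h*(3*a₂) := Nat.mul_le_mul_left h h4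
    _ = 3*(h*a₂) := by ring
    _ = 3*a := by rw [haa]
  have hpm : ((2*m+1) * (c' : ℤ)) % (2*(a:ℤ)) = 2*((h*j:ℕ):ℤ) := by
    rw [key, Int.add_mul_emod_self_left]
    push_cast
    refine Int.emod_eq_of_lt (by positivity) ?_
    exact_mod_cast (by omega : (2*(h*j) : ℕ) < 2*a)
  have hGc : Good ((((2*m+1) * (c' : ℤ) : ℤ) : ℝ) / (((2*(a:ℤ) : ℤ)) : ℝ)) := by
    refine good_div (by positivity) ?_ ?_ <;> rw [hpm]
    · exact_mod_cast (by omega : (2*a : ℕ) ≤ 4*(2*(h*j)))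
    · exact_mod_cast (by omega : (4*(2*(h*j)) : ℕ) ≤ 3*(2*a))
  have ha0 : (a:ℝ) ≠ 0 := by positivity
  obtain ⟨rb, hrb⟩ : ∃ rb : ℕ, b = 2*rb+1 := ⟨b/2, by omega⟩
  have hbr : (b:ℝ) = 2*rb+1 := by exact_mod_cast cast_eq_of_nat hrb
  set xb : ℝ := (2*(m:ℝ)+1)*b/(4*a) with hxb
  rcases good_or xb with hB | hB
  · refine ⟨(2*(m:ℝ)+1)/(4*a), ?_, good_congr (by rw [hxb]; ring) hB, ?_⟩
    · refine good_congr (y := (((2*m+1 : ℤ)):ℝ)/(((4:ℤ)):ℝ)) ?_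
        (good_div (by norm_num) (by omega) (by omega))
      push_cast; field_simp
    · refine good_congr (y := ((((2*m+1) * (c':ℤ) : ℤ)):ℝ)/(((2*(a:ℤ) : ℤ)):ℝ)) ?_ hGc
      push_cast; field_simp; ring
  · refine ⟨(2*(m:ℝ)+1)/(4*a) + 1/2, ?_, ?_, ?_⟩
    · refine good_congr (y := (((2*m+1+2*(a:ℤ) : ℤ)):ℝ)/(((4:ℤ)):ℝ)) ?_
        (good_div (by norm_num) (by omega) (by omega))
      push_cast; field_simp; ring
    · refine good_congr (y := (xb + 1/2) + (rb:ℤ)) ?_ (good_shift hB rb)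
      rw [hxb]; push_cast; rw [hbr]; field_simp; ring
    · refine good_congr
        (y := ((((2*m+1) * (c':ℤ) : ℤ)):ℝ)/(((2*(a:ℤ) : ℤ)):ℝ) + ((c':ℤ):ℝ)) ?_
        (good_shift hGc c')
      push_cast; field_simp; ring

lemma kernelW' {α β : ℕ} (hα : 0 < α) (hle : α ≤ β) :
    ∃ w : ℕ, w % 2 = 1 ∧ 2*α ≤ w % (8*α) ∧ w % (8*α) ≤ 6*α ∧
      2*β ≤ w % (8*β) ∧ w % (8*β) ≤ 6*β := by
  have hβ : 0 < β := lt_of_lt_of_le hα hle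
  rcases lt_or_ge β (2*α) with hc | hc
  · refine ⟨2*β+1, by omega, ?_, ?_, ?_, ?_⟩ <;>
      rw [Nat.mod_eq_of_lt (by omega)] <;> omega
  · set q := (2*β + 6*α - 2) / (8*α) with hqdef
    have hd : 8*α*q + (2*β + 6*α - 2) % (8*α) = 2*β + 6*α - 2 :=
      Nat.div_add_mod _ _
    have hm : (2*β + 6*α - 2) % (8*α) < 8*α :=
      Nat.mod_lt _ (by omega)
    have hmod : (2*α+1 + 8*α*q) % (8*α) = 2*α+1 := by
      rw [Nat.add_mul_mod_self_left, Nat.mod_eq_of_lt (by omega)]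
    obtain ⟨P, hP⟩ : ∃ P, 8*α*q = P := ⟨_, rfl⟩
    have hPe : ∃ r, P = 2*r := ⟨4*(α*q), by rw [← hP]; ring⟩
    obtain ⟨r, hr⟩ := hPe
    rw [hP] at hd hmod
    refine ⟨2*α+1 + P, by omega, ?_, ?_, ?_, ?_⟩
    · rw [hmod]; omega
    · rw [hmod]; omega
    · rw [Nat.mod_eq_of_lt (by omega)]; omega
    · rw [Nat.mod_eq_of_lt (by omega)]; omega

lemma kernelW {α β : ℕ} (hα : 0 < α) (hβ : 0 < β) :
    ∃ w : ℕ, w % 2 = 1 ∧ 2*α ≤ w % (8*α) ∧ w % (8*α) ≤ 6*α ∧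
      2*β ≤ w % (8*β) ∧ w % (8*β) ≤ 6*β := by
  rcases le_total α β with h | h
  · exact kernelW' hα h
  · obtain ⟨w, h1, h2, h3, h4, h5⟩ := kernelW' hβ h
    exact ⟨w, h1, h4, h5, h2, h3⟩

lemma good_quarter (p : ℕ) (hp : p % 4 = 1 ∨ p % 4 = 2 ∨ p % 4 = 3) :
    Good ((1/4:ℝ)*p) := by
  refine good_congr (y := ((p:ℤ):ℝ)/((4:ℤ):ℝ)) (by push_cast; ring)
    (good_div (by norm_num) (by omega) (by omega))

lemma kernel (a b c' : ℕ) (hap : 0 < a) (hbp : 0 < b) (hcp : 0 < c')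
    (hab : (a*b) % 2 = 1) (hcE : c' % 2 = 0) (hda : a ∣ c') (hdb : b ∣ c') :
    ∃ t : ℝ, Good (t*a) ∧ Good (t*b) ∧ Good (t*(2*c')) := by
  set L := Nat.lcm a b with hLdef
  have hL : L ∣ c' := Nat.lcm_dvd hda hdb
  have hLab : L ∣ a*b := Nat.lcm_dvd_mul a b
  have hLpos : 0 < L := Nat.lcm_pos hap hbp
  have hLo : L % 2 = 1 := by
    rcases Nat.mod_two_eq_zero_or_one L with h0 | h1
    · exfalso
      obtain ⟨k, hk⟩ := dvd_trans (Nat.dvd_of_mod_eq_zero h0) hLab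
      omega
    · exact h1
  obtain ⟨m₀, hm₀⟩ := hL
  have hm₀e : m₀ % 2 = 0 := by
    have hm := Nat.mul_mod L m₀ 2
    rw [hLo, one_mul, ← hm₀] at hm
    omega
  obtain ⟨m, hm⟩ : ∃ m, m₀ = 2*m := ⟨m₀/2, by omega⟩
  have hmpos : 0 < m := by
    rcases Nat.eq_zero_or_pos m with h0 | h1
    · exfalso
      have hz : m₀ = 0 := by omega
      rw [hz, Nat.mul_zero] at hm₀
      omega
    · exact h1
  have hcLm : c' = 2*(L*m) := by rw [hm₀, hm]; ring
  set A := L / a with hAdef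
  set B := L / b with hBdef
  have haA : a * A = L := Nat.mul_div_cancel' (Nat.dvd_lcm_left a b)
  have hbB : b * B = L := Nat.mul_div_cancel' (Nat.dvd_lcm_right a b)
  have hApos : 0 < A := by
    rcases Nat.eq_zero_or_pos A with h0 | h1
    · exfalso; rw [h0, Nat.mul_zero] at haA; omega
    · exact h1
  have hBpos : 0 < B := by
    rcases Nat.eq_zero_or_pos B with h0 | h1
    · exfalso; rw [h0, Nat.mul_zero] at hbB; omega
    · exact h1
  obtain ⟨w, hw2, hw3, hw4, hw5, hw6⟩ := kernelW (show 0 < A*m by positivity)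
    (show 0 < B*m by positivity)
  have ha0 : (a:ℝ) ≠ 0 := by positivity
  have hb0 : (b:ℝ) ≠ 0 := by positivity
  have hL0 : (L:ℝ) ≠ 0 := by positivity
  have hm0 : (m:ℝ) ≠ 0 := by positivity
  have hLaR : (L:ℝ) = a * A := by exact_mod_cast (cast_eq_of_nat haA).symm
  have hLbR : (L:ℝ) = b * B := by exact_mod_cast (cast_eq_of_nat hbB).symm
  have hcR : (c':ℝ) = 2*(L*m) := by exact_mod_cast cast_eq_of_nat hcLm
  refine ⟨(w:ℝ)/(8*L*m), ?_, ?_, ?_⟩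
  · refine good_congr (y := ((w:ℤ):ℝ)/(((8*(A*m) : ℕ):ℤ):ℝ)) ?_
      (good_div (by exact_mod_cast (by positivity : (0:ℕ) < 8*(A*m))) ?_ ?_)
    · rw [hLaR]; push_cast; field_simp
    · exact_mod_cast (by omega : 8*(A*m) ≤ 4*(w % (8*(A*m))))
    · exact_mod_cast (by omega : 4*(w % (8*(A*m))) ≤ 3*(8*(A*m)))
  · refine good_congr (y := ((w:ℤ):ℝ)/(((8*(B*m) : ℕ):ℤ):ℝ)) ?_
      (good_div (by exact_mod_cast (by positivity : (0:ℕ) < 8*(B*m))) ?_ ?_)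
    · rw [hLbR]; push_cast; field_simp
    · exact_mod_cast (by omega : 8*(B*m) ≤ 4*(w % (8*(B*m))))
    · exact_mod_cast (by omega : 4*(w % (8*(B*m))) ≤ 3*(8*(B*m)))
  · refine good_congr (y := ((w:ℤ):ℝ)/(((2:ℕ):ℤ):ℝ))  ?_
      (good_div (by norm_num) ?_ ?_)
    · rw [hcR]; push_cast; field_simp; ring
    · exact_mod_cast (by omega : 2 ≤ 4*(w % 2))
    · exact_mod_cast (by omega : 4*(w % 2) ≤ 3*2)

lemma hardcase (a b c' : ℕ) (ha : a % 2 = 1) (hb : b % 2 = 1)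
    (hap : 0 < a) (hbp : 0 < b) (hcp : 0 < c') :
    ∃ t : ℝ, Good (t*a) ∧ Good (t*b) ∧ Good (t*(2*c')) := by
  rcases Nat.mod_two_eq_zero_or_one c' with hcE | hcO
  · by_cases hda : a ∣ c'
    · by_cases hdb : b ∣ c'
      · exact kernel a b c' hap hbp hcp (by rw [Nat.mul_mod, ha, hb]) hcE hda hdb
      · obtain ⟨t, h1, h2, h3⟩ := pinA b a c' hb ha hcE hbp hap hcp hdb
        exact ⟨t, h2, h1, h3⟩
    · exact pinA a b c' ha hb hcE hap hbp hcp hda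
  · refine ⟨1/4, good_quarter a (by omega), good_quarter b (by omega),
      good_congr (by push_cast; ring) (good_quarter (2*c') (by omega))⟩

lemma three_run : ∀ (n a b c : ℕ), a + b + c ≤ n → 0 < a → 0 < b → 0 < c →
    ∃ t : ℝ, Good (t*a) ∧ Good (t*b) ∧ Good (t*c) := by
  intro n
  induction n with
  | zero => intro a b c h ha hb hc; omega
  | succ n ih =>
    intro a b c h hap hbp hcp
    rcases Nat.mod_two_eq_zero_or_one a with ha | ha <;>
      rcases Nat.mod_two_eq_zero_or_one b with hb | hb <;>
        rcases Nat.mod_two_eq_zero_or_one c with hc | hc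
    · -- all even
      obtain ⟨s, h1, h2, h3⟩ := ih (a/2) (b/2) (c/2) (by omega) (by omega) (by omega) (by omega)
      refine ⟨s/2, good_congr ?_ h1, good_congr ?_ h2, good_congr ?_ h3⟩
      · rw [cast_eq_of_nat (show a = 2*(a/2) by omega)]; push_cast; ring
      · rw [cast_eq_of_nat (show b = 2*(b/2) by omega)]; push_cast; ring
      · rw [cast_eq_of_nat (show c = 2*(c/2) by omega)]; push_cast; ring
    · -- a,b even, c odd
      obtain ⟨t, h1, h2, h3⟩ := one_odd c a b hc ha hb hap hbp
      exact ⟨t, h2, h3, h1⟩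
    · -- a even, b odd, c even
      obtain ⟨t, h1, h2, h3⟩ := one_odd b a c hb ha hc hap hcp
      exact ⟨t, h2, h1, h3⟩
    · -- a even, b,c odd
      obtain ⟨t, h1, h2, h3⟩ := hardcase b c (a/2) hb hc hbp hcp (by omega)
      refine ⟨t, good_congr ?_ h3, h1, h2⟩
      rw [cast_eq_of_nat (show a = 2*(a/2) by omega)]; push_cast; ring
    · -- a odd, b,c even
      exact one_odd a b c ha hb hc hbp hcp
    · -- a odd, b even, c odd
      obtain ⟨t, h1, h2, h3⟩ := hardcase a c (b/2) ha hc hap hcp (by omega)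
      refine ⟨t, h1, good_congr ?_ h3, h2⟩
      rw [cast_eq_of_nat (show b = 2*(b/2) by omega)]; push_cast; ring
    · -- a,b odd, c even
      obtain ⟨t, h1, h2, h3⟩ := hardcase a b (c/2) ha hb hap hbp (by omega)
      refine ⟨t, h1, h2, good_congr ?_ h3⟩
      rw [cast_eq_of_nat (show c = 2*(c/2) by omega)]; push_cast; ring
    · -- all odd
      exact ⟨1/2, good_half_nat a ha, good_half_nat b hb, good_half_nat c hc⟩

lemma main_aux (w₁ w₂ w₃ w₄ : ℕ) (h₁ : 0 < w₁) (h₂ : 0 < w₂) (h₃ : 0 < w₃)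
    (hg : 2 ≤ Nat.gcd (Nat.gcd w₁ w₂) w₃)
    (hco : Nat.gcd (Nat.gcd (Nat.gcd w₁ w₂) w₃) w₄ = 1) :
    ∃ t : ℝ, Good (t*w₁) ∧ Good (t*w₂) ∧ Good (t*w₃) ∧ Good (t*w₄) := by
  set g := Nat.gcd (Nat.gcd w₁ w₂) w₃ with hgdef
  have hgd1 : g ∣ w₁ := dvd_trans (Nat.gcd_dvd_left _ _) (Nat.gcd_dvd_left _ _)
  have hgd2 : g ∣ w₂ := dvd_trans (Nat.gcd_dvd_left _ _) (Nat.gcd_dvd_right _ _)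
  have hgd3 : g ∣ w₃ := Nat.gcd_dvd_right _ _
  have hu1 : g * (w₁/g) = w₁ := Nat.mul_div_cancel' hgd1
  have hu2 : g * (w₂/g) = w₂ := Nat.mul_div_cancel' hgd2
  have hu3 : g * (w₃/g) = w₃ := Nat.mul_div_cancel' hgd3
  obtain ⟨s, hG1, hG2, hG3⟩ := three_run (w₁/g + w₂/g + w₃/g) (w₁/g) (w₂/g) (w₃/g)
    le_rfl (Nat.div_pos (Nat.le_of_dvd h₁ hgd1) (by omega))
    (Nat.div_pos (Nat.le_of_dvd h₂ hgd2) (by omega))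
    (Nat.div_pos (Nat.le_of_dvd h₃ hgd3) (by omega))
  have hbez : (g:ℤ) * Nat.gcdA g w₄ + (w₄:ℤ) * Nat.gcdB g w₄ = 1 := by
    have := Nat.gcd_eq_gcd_ab g w₄
    rw [hco] at this
    push_cast at this
    linarith
  set X := Nat.gcdA g w₄
  set Y := Nat.gcdB g w₄
  have hgR : (g:ℝ) ≠ 0 := by
    have : 0 < g := by omega
    positivity
  set z : ℝ := s * w₄ / g with hz
  obtain ⟨j, hj⟩ := good_spaced z (1/(g:ℝ))
    (by
      have hgp : (0:ℝ) < g := by exact_mod_cast (by omega : 0 < g)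
      exact one_div_pos.mpr hgp)
    (by
      have h2 : (2:ℝ) ≤ g := by exact_mod_cast hg
      rw [div_le_div_iff₀ (by linarith) (by norm_num)]
      linarith)
  set k : ℤ := j * Y with hk
  refine ⟨(s + k)/g, ?_, ?_, ?_, ?_⟩
  · refine good_congr (y := s * ((w₁/g : ℕ):ℝ) + ((k * (w₁/g : ℕ) : ℤ):ℝ)) ?_
      (good_shift hG1 _)
    rw [← cast_eq_of_nat hu1]; push_cast; field_simp; rw [← Int.natCast_div, Int.cast_natCast]; ring
  · refine good_congr (y := s * ((w₂/g : ℕ):ℝ) + ((k * (w₂/g : ℕ) : ℤ):ℝ)) ?_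
      (good_shift hG2 _)
    rw [← cast_eq_of_nat hu2]; push_cast; field_simp; rw [← Int.natCast_div, Int.cast_natCast]; ring
  · refine good_congr (y := s * ((w₃/g : ℕ):ℝ) + ((k * (w₃/g : ℕ) : ℤ):ℝ)) ?_
      (good_shift hG3 _)
    rw [← cast_eq_of_nat hu3]; push_cast; field_simp; rw [← Int.natCast_div, Int.cast_natCast]; ring
  · refine good_congr (y := (z + j * (1/(g:ℝ))) + ((-(j*X) : ℤ):ℝ)) ?_
      (good_shift hj _)
    have hbezR : (g:ℝ)*X + (w₄:ℝ)*Y = 1 := by exact_mod_cast hbez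
    rw [hz, hk]
    push_cast
    field_simp
    linear_combination (j:ℝ) * hbezR

lemma gcd4_div {D a b c d : ℕ} (h1 : D ∣ a) (h2 : D ∣ b) (h3 : D ∣ c) (h4 : D ∣ d)
    (h : Nat.gcd (Nat.gcd (Nat.gcd a b) c) d = 1) : D = 1 :=
  Nat.dvd_one.mp (h ▸ Nat.dvd_gcd (Nat.dvd_gcd (Nat.dvd_gcd h1 h2) h3) h4)

theorem stmt_7 (v₁ v₂ v₃ v₄ : ℕ) (h₁ : 0 < v₁) (h₂ : 0 < v₂) (h₃ : 0 < v₃) (h₄ : 0 < v₄)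
    (hgcd : Nat.gcd (Nat.gcd (Nat.gcd v₁ v₂) v₃) v₄ = 1)
    (htriple : 2 ≤ Nat.gcd (Nat.gcd v₁ v₂) v₃ ∨ 2 ≤ Nat.gcd (Nat.gcd v₁ v₂) v₄ ∨
      2 ≤ Nat.gcd (Nat.gcd v₁ v₃) v₄ ∨ 2 ≤ Nat.gcd (Nat.gcd v₂ v₃) v₄) :
    ML ![(v₁ : ℝ), (v₂ : ℝ), (v₃ : ℝ), (v₄ : ℝ)] ≥ 1 / 4 := by
  have finish : ∀ t : ℝ, Good (t*v₁) → Good (t*v₂) → Good (t*v₃) → Good (t*v₄) →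
      ML ![(v₁ : ℝ), (v₂ : ℝ), (v₃ : ℝ), (v₄ : ℝ)] ≥ 1 / 4 := by
    intro t g1 g2 g3 g4
    rw [ML, ge_iff_le]
    have hb : BddAbove (Set.range fun u : ℝ =>
        ⨅ i, dnn (u * ![(v₁:ℝ), (v₂:ℝ), (v₃:ℝ), (v₄:ℝ)] i)) := by
      refine ⟨1/2, ?_⟩
      rintro y ⟨u, rfl⟩
      refine le_trans (ciInf_le ⟨0, ?_⟩ 0) (dnn_le_half _)
      rintro z ⟨i, rfl⟩
      exact dnn_nonneg _
    refine le_ciSup_of_le hb t (le_ciInf fun i => ?_)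
    fin_cases i
    · simpa using good_dnn g1
    · simpa using good_dnn g2
    · simpa using good_dnn g3
    · simpa using good_dnn g4
  rcases htriple with H | H | H | H
  · obtain ⟨t, g1, g2, g3, g4⟩ := main_aux v₁ v₂ v₃ v₄ h₁ h₂ h₃ H hgcd
    exact finish t g1 g2 g3 g4
  · have hco : Nat.gcd (Nat.gcd (Nat.gcd v₁ v₂) v₄) v₃ = 1 := by
      refine gcd4_div ?_ ?_ ?_ ?_ hgcd
      · exact dvd_trans (dvd_trans (Nat.gcd_dvd_left _ _) (Nat.gcd_dvd_left _ _)) (Nat.gcd_dvd_left _ _)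
      · exact dvd_trans (dvd_trans (Nat.gcd_dvd_left _ _) (Nat.gcd_dvd_left _ _)) (Nat.gcd_dvd_right _ _)
      · exact Nat.gcd_dvd_right _ _
      · exact dvd_trans (Nat.gcd_dvd_left _ _) (Nat.gcd_dvd_right _ _)
    obtain ⟨t, g1, g2, g4, g3⟩ := main_aux v₁ v₂ v₄ v₃ h₁ h₂ h₄ H hco
    exact finish t g1 g2 g3 g4
  · have hco : Nat.gcd (Nat.gcd (Nat.gcd v₁ v₃) v₄) v₂ = 1 := by
      refine gcd4_div ?_ ?_ ?_ ?_ hgcd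
      · exact dvd_trans (dvd_trans (Nat.gcd_dvd_left _ _) (Nat.gcd_dvd_left _ _)) (Nat.gcd_dvd_left _ _)
      · exact Nat.gcd_dvd_right _ _
      · exact dvd_trans (dvd_trans (Nat.gcd_dvd_left _ _) (Nat.gcd_dvd_left _ _)) (Nat.gcd_dvd_right _ _)
      · exact dvd_trans (Nat.gcd_dvd_left _ _) (Nat.gcd_dvd_right _ _)
    obtain ⟨t, g1, g3, g4, g2⟩ := main_aux v₁ v₃ v₄ v₂ h₁ h₃ h₄ H hco
    exact finish t g1 g2 g3 g4
  · have hco : Nat.gcd (Nat.gcd (Nat.gcd v₂ v₃) v₄) v₁ = 1 := by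
      refine gcd4_div ?_ ?_ ?_ ?_ hgcd
      · exact Nat.gcd_dvd_right _ _
      · exact dvd_trans (dvd_trans (Nat.gcd_dvd_left _ _) (Nat.gcd_dvd_left _ _)) (Nat.gcd_dvd_left _ _)
      · exact dvd_trans (dvd_trans (Nat.gcd_dvd_left _ _) (Nat.gcd_dvd_left _ _)) (Nat.gcd_dvd_right _ _)
      · exact dvd_trans (Nat.gcd_dvd_left _ _) (Nat.gcd_dvd_right _ _)
    obtain ⟨t, g2, g3, g4, g1⟩ := main_aux v₂ v₃ v₄ v₁ h₂ h₃ h₄ H hco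
    exact finish t g1 g2 g3 g4
end

section
/- Let a, b be real numbers with 0 ≤ a, b < 1, and let v₁, v₂, g be positive integers such that g ≥ 6, gcd(v₁, g) = 1, g does not divide v₂, and v₂ is not congruent to v₁ or to −v₁ modulo g. Then there exists an integer h such that min(‖(h/g)·v₁ + a‖, ‖(h/g)·v₂ + b‖) ≥ 1/4. -/
/-- Auxiliary predicate: `x` is at distance at least 1/4 from every integer. -/
def GoodPt (x : ℝ) : Prop := ∀ m : ℤ, 1 / 4 ≤ |x - m|

lemma dnn_ge_of_goodPt {x : ℝ} (h : GoodPt x) : 1 / 4 ≤ dnn x :=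
  le_ciInf h

lemma goodPt_of_bounds {x : ℝ} (h1 : 1 / 4 ≤ x) (h2 : x ≤ 3 / 4) : GoodPt x := by
  intro m
  rcases le_or_gt (m : ℝ) 0 with hm | hm
  · rw [abs_of_nonneg (by linarith)]; linarith
  · have hm1 : (1 : ℝ) ≤ m := by exact_mod_cast hm
    rw [abs_of_nonpos (by linarith)]; linarith

lemma goodPt_add_int {x : ℝ} (h : GoodPt x) (k : ℤ) : GoodPt (x + k) := by
  intro m
  have hx := h (m - k)
  have e : x + (k : ℝ) - m = x - ((m - k : ℤ) : ℝ) := by push_cast; ring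
  rw [e]; exact hx

lemma goodPt_neg {x : ℝ} (h : GoodPt x) : GoodPt (-x) := by
  intro m
  have hx := h (-m)
  have e : -x - (m : ℝ) = -(x - ((-m : ℤ) : ℝ)) := by push_cast; ring
  rw [e, abs_neg]; exact hx

lemma key_lemma (a b : ℝ) (g w : ℤ) (hg : 6 ≤ g) (hw2 : 2 ≤ w) (hwg : 2 * w ≤ g) :
    ∃ t : ℤ, GoodPt ((t : ℝ) / g + a) ∧ GoodPt ((t : ℝ) * w / g + b) := by
  have hg0 : (0 : ℝ) < g := by exact_mod_cast (by omega : (0 : ℤ) < g)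
  set t₀ : ℤ := ⌈(g : ℝ) * (1 / 4 - a)⌉ with ht₀
  set t₁ : ℤ := ⌊(g : ℝ) * (3 / 4 - a)⌋ with ht₁
  have hspan : g - 3 ≤ 2 * (t₁ - t₀) := by
    have h1 : (g : ℝ) * (3 / 4 - a) < t₁ + 1 := Int.lt_floor_add_one _
    have h2 : (t₀ : ℝ) < (g : ℝ) * (1 / 4 - a) + 1 := Int.ceil_lt_add_one _
    have h3 : ((g - 4 : ℤ) : ℝ) < ((2 * (t₁ - t₀) : ℤ) : ℝ) := by push_cast; linarith
    have h4 : (g - 4 : ℤ) < 2 * (t₁ - t₀) := by exact_mod_cast h3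
    omega
  have ht01 : t₀ ≤ t₁ := by omega
  have h01 : ∀ t : ℤ, t₀ ≤ t → t ≤ t₁ → GoodPt ((t : ℝ) / g + a) := by
    intro t h1 h2
    have l1 : (g : ℝ) * (1 / 4 - a) ≤ t :=
      le_trans (Int.le_ceil _) (by exact_mod_cast h1)
    have l2 : (t : ℝ) ≤ (g : ℝ) * (3 / 4 - a) :=
      le_trans (by exact_mod_cast h2) (Int.floor_le _)
    apply goodPt_of_bounds
    · have : 1 / 4 - a ≤ (t : ℝ) / g := by rw [le_div_iff₀ hg0]; linarith
      linarith
    · have : (t : ℝ) / g ≤ 3 / 4 - a := by rw [div_le_iff₀ hg0]; linarith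
      linarith
  by_contra hcon
  push_neg at hcon
  have hbad : ∀ t : ℤ, t₀ ≤ t → t ≤ t₁ → ∃ m : ℤ, |(t : ℝ) * w / g + b - m| < 1 / 4 := by
    intro t h1 h2
    have hq : ¬ GoodPt ((t : ℝ) * w / g + b) := by
      intro hq
      exact (hcon t (h01 t h1 h2)) hq
    unfold GoodPt at hq
    push_neg at hq
    exact hq
  obtain ⟨m₀, hm₀⟩ := hbad t₀ le_rfl ht01
  have hwpos : (0 : ℝ) < (w : ℝ) / g := by
    apply div_pos _ hg0
    exact_mod_cast (by omega : (0 : ℤ) < w)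
  have hwhalf : (w : ℝ) / g ≤ 1 / 2 := by
    rw [div_le_iff₀ hg0]
    have h5 : ((2 * w : ℤ) : ℝ) ≤ ((g : ℤ) : ℝ) := by exact_mod_cast hwg
    push_cast at h5
    linarith
  have claim : ∀ j : ℕ, t₀ + (j : ℤ) ≤ t₁ →
      |((t₀ : ℝ) + (j : ℝ)) * w / g + b - m₀| < 1 / 4 := by
    intro j
    induction j with
    | zero => intro _; simpa using hm₀
    | succ n ih =>
      intro hle
      have hlen : t₀ + (n : ℤ) ≤ t₁ := by push_cast at hle ⊢; omega
      have IH := ih hlen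
      obtain ⟨m, hm⟩ := hbad (t₀ + ((n : ℤ) + 1)) (by omega) (by push_cast at hle ⊢; omega)
      have e : ((t₀ + ((n : ℤ) + 1) : ℤ) : ℝ) * w / g + b - m
          = (((t₀ : ℝ) + (n : ℝ)) * w / g + b - m₀) + (w / g) - ((m : ℝ) - m₀) := by
        push_cast; ring
      rw [e] at hm
      rw [abs_lt] at IH hm
      have hd1 : ((m : ℝ) - m₀) < 1 := by linarith
      have hd2 : (-(1 : ℝ) / 2) < (m : ℝ) - m₀ := by linarith
      have hmm : m = m₀ := by
        have c1 : ((m - m₀ : ℤ) : ℝ) < 1 := by push_cast; linarith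
        have c2 : (-1 : ℝ) < ((m - m₀ : ℤ) : ℝ) := by push_cast; linarith
        have c1' : (m - m₀ : ℤ) < 1 := by exact_mod_cast c1
        have c2' : (-1 : ℤ) < (m - m₀ : ℤ) := by exact_mod_cast c2
        omega
      subst hmm
      have e2 : ((t₀ : ℝ) + ((n + 1 : ℕ) : ℝ)) * w / g + b - (m : ℝ)
          = (((t₀ : ℝ) + (n : ℝ)) * w / g + b - m) + (w / g) - ((m : ℝ) - m) := by
        push_cast; ring
      rw [e2, abs_lt]
      exact hm
  -- apply claim at the last point
  have hj : t₀ + ((t₁ - t₀).toNat : ℤ) ≤ t₁ := by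
    rw [Int.toNat_of_nonneg (by omega : (0:ℤ) ≤ t₁ - t₀)]; omega
  have hfin := claim (t₁ - t₀).toNat hj
  have ecast : (((t₁ - t₀).toNat : ℕ) : ℝ) = ((t₁ : ℝ) - t₀) := by
    rw [← Int.cast_natCast, Int.toNat_of_nonneg (by omega : (0:ℤ) ≤ t₁ - t₀)]
    push_cast; ring
  rw [ecast] at hfin
  have hbig : (1 : ℝ) / 2 ≤ ((t₁ : ℝ) - t₀) * w / g := by
    rw [le_div_iff₀ hg0]
    have hZ : g ≤ 2 * ((t₁ - t₀) * w) := by nlinarith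
    have h6 : ((g : ℤ) : ℝ) ≤ ((2 * ((t₁ - t₀) * w) : ℤ) : ℝ) := by exact_mod_cast hZ
    push_cast at h6
    linarith
  rw [abs_lt] at hm₀ hfin
  have expand : ((t₀ : ℝ) + ((t₁ : ℝ) - t₀)) * w / g
      = (t₀ : ℝ) * w / g + ((t₁ : ℝ) - t₀) * w / g := by ring
  rw [expand] at hfin
  linarith [hm₀.1, hfin.2]

theorem stmt_8 (a b : ℝ) (ha₀ : 0 ≤ a) (ha₁ : a < 1) (hb₀ : 0 ≤ b) (hb₁ : b < 1)
    (v₁ v₂ g : ℕ) (hv₁ : 0 < v₁) (hv₂ : 0 < v₂) (hg : 6 ≤ g)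
    (hcop : Nat.gcd v₁ g = 1) (hndvd : ¬ (g : ℤ) ∣ (v₂ : ℤ))
    (hne₁ : ¬ (v₂ : ℤ) ≡ (v₁ : ℤ) [ZMOD (g : ℤ)])
    (hne₂ : ¬ (v₂ : ℤ) ≡ -(v₁ : ℤ) [ZMOD (g : ℤ)]) :
    ∃ h : ℤ, 1 / 4 ≤
      min (dnn ((h : ℝ) / (g : ℝ) * (v₁ : ℝ) + a)) (dnn ((h : ℝ) / (g : ℝ) * (v₂ : ℝ) + b)) := by
  have hgZ : (6 : ℤ) ≤ (g : ℤ) := by exact_mod_cast hg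
  have hg0 : (0 : ℤ) < (g : ℤ) := by omega
  have hg0R : (0 : ℝ) < (g : ℝ) := by exact_mod_cast hg0
  have hgne : (g : ℝ) ≠ 0 := ne_of_gt hg0R
  -- Bezout: c * v₁ ≡ 1 mod g
  have hbez : (Nat.gcd v₁ g : ℤ) = v₁ * Nat.gcdA v₁ g + g * Nat.gcdB v₁ g := Nat.gcd_eq_gcd_ab v₁ g
  rw [hcop] at hbez
  set c : ℤ := Nat.gcdA v₁ g with hc
  set B : ℤ := Nat.gcdB v₁ g with hB
  have hcv₁ : c * (v₁ : ℤ) = 1 - (g : ℤ) * B := by push_cast at hbez; linarith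
  set w' : ℤ := (c * v₂) % (g : ℤ) with hw'
  have hw'0 : 0 ≤ w' := Int.emod_nonneg _ (by omega)
  have hw'g : w' < g := Int.emod_lt_of_pos _ hg0
  set f : ℤ := (c * v₂) / (g : ℤ) with hf
  have hcv₂ : c * (v₂ : ℤ) = (g : ℤ) * f + w' := (Int.mul_ediv_add_emod _ _).symm
  -- w' ≠ 0
  have hw'ne0 : w' ≠ 0 := by
    intro h0
    apply hndvd
    refine ⟨v₁ * f + (v₂ : ℤ) * B, ?_⟩
    rw [h0] at hcv₂
    linear_combination (v₁ : ℤ) * hcv₂ - (v₂ : ℤ) * hcv₁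
  -- w' ≠ 1
  have hw'ne1 : w' ≠ 1 := by
    intro h1
    apply hne₁
    rw [Int.modEq_iff_dvd]
    refine ⟨-((v₁ : ℤ) * f + (v₂ : ℤ) * B), ?_⟩
    rw [h1] at hcv₂
    linear_combination (v₂ : ℤ) * hcv₁ - (v₁ : ℤ) * hcv₂
  -- w' ≠ g - 1
  have hw'neg : w' ≠ (g : ℤ) - 1 := by
    intro h1
    apply hne₂
    rw [Int.modEq_iff_dvd]
    refine ⟨-((v₁ : ℤ) * f + (v₁ : ℤ) + (v₂ : ℤ) * B), ?_⟩
    rw [h1] at hcv₂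
    linear_combination (v₂ : ℤ) * hcv₁ - (v₁ : ℤ) * hcv₂
  have hw'2 : 2 ≤ w' := by omega
  have hw'le : w' ≤ (g : ℤ) - 2 := by omega
  rcases le_or_gt (2 * w') (g : ℤ) with hle | hgt
  · -- case 2 * w' ≤ g : take h := t * c
    obtain ⟨t, H1, H2⟩ := key_lemma a b (g : ℤ) w' hgZ hw'2 hle
    refine ⟨t * c, le_min ?_ ?_⟩
    · apply dnn_ge_of_goodPt
      have hZ : (t * c) * (v₁ : ℤ) = t + (g : ℤ) * (-(t * B)) := by
        linear_combination t * hcv₁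
      have hR : ((t * c : ℤ) : ℝ) * (v₁ : ℝ) = (t : ℝ) + (g : ℝ) * ((-(t * B) : ℤ) : ℝ) := by
        exact_mod_cast hZ
      have e1 : ((t * c : ℤ) : ℝ) / g * v₁ + a = ((t : ℝ) / g + a) + ((-(t * B) : ℤ) : ℝ) := by
        push_cast at hR ⊢
        field_simp
        linear_combination hR
      rw [e1]
      exact goodPt_add_int H1 _
    · apply dnn_ge_of_goodPt
      have hZ : (t * c) * (v₂ : ℤ) = t * w' + (g : ℤ) * (t * f) := by
        linear_combination t * hcv₂
      have hR : ((t * c : ℤ) : ℝ) * (v₂ : ℝ) = (t : ℝ) * (w' : ℝ) + (g : ℝ) * ((t * f : ℤ) : ℝ) := by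
        exact_mod_cast hZ
      have e2 : ((t * c : ℤ) : ℝ) / g * v₂ + b = ((t : ℝ) * w' / g + b) + ((t * f : ℤ) : ℝ) := by
        push_cast at hR ⊢
        field_simp
        linear_combination hR
      rw [e2]
      exact goodPt_add_int H2 _
  · -- case 2 * w' > g : use w'' = g - w' and h := -(t * c)
    set w'' : ℤ := (g : ℤ) - w' with hw''
    have hw''2 : 2 ≤ w'' := by omega
    have hw''le : 2 * w'' ≤ (g : ℤ) := by omega
    obtain ⟨t, H1, H2⟩ := key_lemma (-a) b (g : ℤ) w'' hgZ hw''2 hw''le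
    refine ⟨-(t * c), le_min ?_ ?_⟩
    · apply dnn_ge_of_goodPt
      have hZ : (-(t * c)) * (v₁ : ℤ) = -t + (g : ℤ) * (t * B) := by
        linear_combination (-t) * hcv₁
      have hR : ((-(t * c) : ℤ) : ℝ) * (v₁ : ℝ) = -(t : ℝ) + (g : ℝ) * ((t * B : ℤ) : ℝ) := by
        exact_mod_cast hZ
      have e1 : ((-(t * c) : ℤ) : ℝ) / g * v₁ + a
          = (-((t : ℝ) / g + (-a))) + ((t * B : ℤ) : ℝ) := by
        push_cast at hR ⊢
        field_simp
        linear_combination hR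
      rw [e1]
      exact goodPt_add_int (goodPt_neg H1) _
    · apply dnn_ge_of_goodPt
      have hZ : (-(t * c)) * (v₂ : ℤ) = t * w'' + (g : ℤ) * (-(t * f) - t) := by
        linear_combination (-t) * hcv₂
      have hR : ((-(t * c) : ℤ) : ℝ) * (v₂ : ℝ)
          = (t : ℝ) * (w'' : ℝ) + (g : ℝ) * ((-(t * f) - t : ℤ) : ℝ) := by
        exact_mod_cast hZ
      have e2 : ((-(t * c) : ℤ) : ℝ) / g * v₂ + b
          = ((t : ℝ) * w'' / g + b) + ((-(t * f) - t : ℤ) : ℝ) := by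
        push_cast at hR ⊢
        field_simp
        linear_combination hR
      rw [e2]
      exact goodPt_add_int H2 _
end

section
/- (Shifted Lonely Runner Conjecture for three moving runners) Let v₁, v₂, v₃ be pairwise distinct positive integers with gcd(v₁, v₂, v₃) = 1, and let s₁, s₂, s₃ be arbitrary real starting points. Then there exists a real number t such that ‖sⱼ + t·vⱼ‖ ≥ 1/4 for all j ∈ {1, 2, 3}. -/
private def Bd (v s t : ℝ) : Prop := ∃ m : ℤ, |s + t * v - (m : ℝ)| < 1 / 4

private noncomputable def Lft (v s : ℝ) (m : ℤ) : ℝ := ((m : ℝ) - 1/4 - s) / v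

private noncomputable def Gpt (v s : ℝ) (j : ℤ) : ℝ := ((j : ℝ) + 1/4 - s) / v

private lemma half_quarter (z : ℤ) : (1/4 : ℝ) ≤ |(z : ℝ)/2 + 1/4| := by
  rcases le_or_gt 0 z with h | h
  · have hz : (0:ℝ) ≤ (z:ℝ) := by exact_mod_cast h
    rw [abs_of_nonneg (by linarith)]
    linarith
  · have hz' : z ≤ -1 := by omega
    have hz : (z:ℝ) ≤ -1 := by exact_mod_cast hz'
    rw [le_abs]
    right
    linarith

private lemma not_bd (v s t : ℝ) (kk : ℤ) (h : s + t * v = (kk : ℝ)/2 + 1/4) :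
    ¬ Bd v s t := by
  rintro ⟨m, hm⟩
  rw [h] at hm
  have h2 : (kk:ℝ)/2 + 1/4 - (m:ℝ) = ((kk - 2*m : ℤ) : ℝ)/2 + 1/4 := by push_cast; ring
  rw [h2] at hm
  exact absurd hm (not_lt.mpr (half_quarter _))

private lemma escape (v s x : ℝ) (hv : 0 < v) :
    ∃ t, x ≤ t ∧ t ≤ x + 1/(2*v) ∧ ¬ Bd v s t := by
  refine ⟨(((⌈2*(s + x*v) - 1/2⌉ : ℤ) : ℝ)/2 + 1/4 - s)/v, ?_, ?_,
    not_bd _ _ _ (⌈2*(s + x*v) - 1/2⌉) (by field_simp; ring)⟩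
  · have h1 := Int.le_ceil (2*(s + x*v) - 1/2)
    rw [le_div_iff₀ hv]
    linarith
  · have h2 := Int.ceil_lt_add_one (2*(s + x*v) - 1/2)
    rw [div_le_iff₀ hv]
    have e : (x + 1/(2*v))*v = x*v + 1/2 := by field_simp
    rw [e]
    linarith

private lemma bd_iff (v s t : ℝ) (hv : 0 < v) :
    Bd v s t ↔ ∃ m : ℤ, Lft v s m < t ∧ t < Lft v s m + 1/(2*v) := by
  constructor
  · rintro ⟨m, hm⟩
    rw [abs_lt] at hm
    refine ⟨m, ?_, ?_⟩
    · unfold Lft; rw [div_lt_iff₀ hv]; linarith [hm.1]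
    · unfold Lft
      have e : ((m:ℝ) - 1/4 - s)/v + 1/(2*v) = ((m:ℝ) + 1/4 - s)/v := by field_simp; ring
      rw [e, lt_div_iff₀ hv]; linarith [hm.2]
  · rintro ⟨m, h1, h2⟩
    refine ⟨m, ?_⟩
    rw [abs_lt]
    unfold Lft at h1 h2
    rw [div_lt_iff₀ hv] at h1
    have e : ((m:ℝ) - 1/4 - s)/v + 1/(2*v) = ((m:ℝ) + 1/4 - s)/v := by field_simp; ring
    rw [e, lt_div_iff₀ hv] at h2
    constructor <;> linarith

private lemma lft_good (v s : ℝ) (m : ℤ) (hv : 0 < v) : ¬ Bd v s (Lft v s m) := by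
  apply not_bd v s _ (2*m - 1)
  unfold Lft
  push_cast
  field_simp
  ring

private lemma rgt_good (v s : ℝ) (m : ℤ) (hv : 0 < v) : ¬ Bd v s (Lft v s m + 1/(2*v)) := by
  apply not_bd v s _ (2*m)
  unfold Lft
  push_cast
  field_simp
  ring

private lemma gap_good (v s : ℝ) (j : ℤ) (hv : 0 < v) (t : ℝ)
    (h1 : Gpt v s j ≤ t) (h2 : t ≤ Gpt v s j + 1/(2*v)) : ¬ Bd v s t := by
  rintro ⟨m, hm⟩
  rw [abs_lt] at hm
  unfold Gpt at h1 h2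
  rw [div_le_iff₀ hv] at h1
  have e : ((j:ℝ) + 1/4 - s)/v + 1/(2*v) = ((j:ℝ) + 3/4 - s)/v := by field_simp; ring
  rw [e, le_div_iff₀ hv] at h2
  rcases le_or_gt m j with h | h
  · have hmj : (m:ℝ) ≤ (j:ℝ) := by exact_mod_cast h
    linarith [hm.2]
  · have hmj : (j:ℝ) + 1 ≤ (m:ℝ) := by exact_mod_cast h
    linarith [hm.1]

private lemma lft_diff (v s : ℝ) (k1 k2 : ℤ) (hv : 0 < v) :
    Lft v s k2 - Lft v s k1 = ((k2 - k1 : ℤ):ℝ)/v := by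
  unfold Lft
  push_cast
  ring

private lemma lft_gap (v s : ℝ) (k1 k2 : ℤ) (hv : 0 < v)
    (h : Lft v s k1 < Lft v s k2) : Lft v s k1 + 1/v ≤ Lft v s k2 := by
  have hd := lft_diff v s k1 k2 hv
  have h1 : (0:ℝ) < ((k2 - k1 : ℤ):ℝ)/v := by linarith
  have h2 : (0:ℝ) < ((k2 - k1 : ℤ):ℝ) := by
    by_contra h3
    push_neg at h3
    have := div_nonpos_of_nonpos_of_nonneg h3 hv.le
    linarith
  have h3 : (0:ℤ) < k2 - k1 := by exact_mod_cast h2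
  have h4 : (1:ℝ) ≤ ((k2 - k1:ℤ):ℝ) := by exact_mod_cast h3
  have h5 : 1/v ≤ ((k2-k1:ℤ):ℝ)/v := by gcongr
  linarith

private lemma lft_mono (v s : ℝ) (k1 k2 : ℤ) (hv : 0 < v) (h : k1 < k2) :
    Lft v s k1 < Lft v s k2 := by
  have hd := lft_diff v s k1 k2 hv
  have h1 : (1:ℤ) ≤ k2 - k1 := by omega
  have h2 : (1:ℝ) ≤ ((k2 - k1:ℤ):ℝ) := by exact_mod_cast h1
  have h3 : (0:ℝ) < ((k2 - k1:ℤ):ℝ)/v := div_pos (by linarith) hv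
  linarith

private lemma fit (m s base lo hi : ℝ) (hm0 : 0 < m) (hs : 0 < s)
    (hm : hi ≤ lo + m)
    (H : ∀ d : ℤ, ∃ x, lo < x ∧ x < hi ∧ ∃ n : ℤ, x = base + d * s + n * m) :
    m - s < hi - lo := by
  by_contra hcon
  push_neg at hcon
  have hd1 := Int.le_ceil ((hi - base)/s)
  have hd2 := Int.ceil_lt_add_one ((hi - base)/s)
  set d : ℤ := ⌈(hi - base)/s⌉ with hdd
  have hv1 : hi ≤ base + (d:ℝ) * s := by
    rw [div_le_iff₀ hs] at hd1
    linarith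
  have hv2 : base + (d:ℝ) * s < hi + s := by
    have h2' : ((d:ℝ)) * s < ((hi - base)/s + 1) * s := by
      exact mul_lt_mul_of_pos_right hd2 hs
    rw [add_mul, div_mul_cancel₀ _ hs.ne'] at h2'
    linarith
  obtain ⟨x, hx1, hx2, n, hxe⟩ := H d
  have hneg : (n:ℝ) * m < 0 := by linarith
  have hgt : -m < (n:ℝ) * m := by linarith
  have hn0 : n < 0 := by
    by_contra hh
    push_neg at hh
    have : (0:ℝ) ≤ (n:ℝ) * m := mul_nonneg (by exact_mod_cast hh) hm0.le
    linarith
  have hn0' : n ≤ -1 := by omega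
  have hn1 : (n:ℝ) ≤ -1 := by exact_mod_cast hn0'
  have : (n:ℝ) * m ≤ (-1) * m := mul_le_mul_of_nonneg_right hn1 hm0.le
  linarith

set_option maxHeartbeats 2000000 in
private lemma key (a b c : ℕ) (ha : 0 < a) (hab : a < b) (hbc : b < c)
    (hg : ∀ d : ℕ, d ∣ a → d ∣ b → d ∣ c → d = 1) (sa sb sc : ℝ) :
    ∃ t : ℝ, ¬ Bd (a:ℝ) sa t ∧ ¬ Bd (b:ℝ) sb t ∧ ¬ Bd (c:ℝ) sc t := by
  by_contra hcon
  have cover : ∀ t, ¬ Bd (a:ℝ) sa t → ¬ Bd (c:ℝ) sc t → Bd (b:ℝ) sb t := by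
    intro t h1 h3
    by_contra h2
    exact hcon ⟨t, h1, h2, h3⟩
  have hb : 0 < b := ha.trans hab
  have hc : 0 < c := hb.trans hbc
  have hA : (0:ℝ) < (a:ℝ) := by exact_mod_cast ha
  have hB : (0:ℝ) < (b:ℝ) := by exact_mod_cast hb
  have hC : (0:ℝ) < (c:ℝ) := by exact_mod_cast hc
  have hABR : (a:ℝ) < (b:ℝ) := by exact_mod_cast hab
  have hBCR : (b:ℝ) < (c:ℝ) := by exact_mod_cast hbc
  have hβα : 1/(2*(b:ℝ)) < 1/(2*(a:ℝ)) := by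
    apply one_div_lt_one_div_of_lt (by linarith) (by linarith)
  have hγβ : 1/(2*(c:ℝ)) < 1/(2*(b:ℝ)) := by
    apply one_div_lt_one_div_of_lt (by linarith) (by linarith)
  have hα0 : (0:ℝ) < 1/(2*(a:ℝ)) := by positivity
  have hβ0 : (0:ℝ) < 1/(2*(b:ℝ)) := by positivity
  have hγ0 : (0:ℝ) < 1/(2*(c:ℝ)) := by positivity
  have h1B : (1:ℝ)/(b:ℝ) = 2*(1/(2*(b:ℝ))) := by ring
  -- gap structure
  have gapStruct : ∀ j : ℤ, ∃ k : ℤ,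
      (Gpt (a:ℝ) sa j + 1/(2*(a:ℝ)) - 1/(2*(b:ℝ)) - 1/(2*(c:ℝ)) < Lft (b:ℝ) sb k) ∧
      (Lft (b:ℝ) sb k < Gpt (a:ℝ) sa j + 1/(2*(c:ℝ))) ∧
      (∀ z, Gpt (a:ℝ) sa j ≤ z → z ≤ Gpt (a:ℝ) sa j + 1/(2*(a:ℝ)) → ¬ Bd (c:ℝ) sc z →
        Lft (b:ℝ) sb k < z ∧ z < Lft (b:ℝ) sb k + 1/(2*(b:ℝ))) := by
    intro j
    have bridge : ∀ k1 : ℤ, Gpt (a:ℝ) sa j < Lft (b:ℝ) sb k1 + 1/(2*(b:ℝ)) →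
        Lft (b:ℝ) sb k1 + 1/(2*(b:ℝ)) + 1/(2*(c:ℝ)) ≤ Gpt (a:ℝ) sa j + 1/(2*(a:ℝ)) → False := by
      intro k1 h1 h2
      obtain ⟨t', ht1, ht2, ht3⟩ := escape (c:ℝ) sc (Lft (b:ℝ) sb k1 + 1/(2*(b:ℝ))) hC
      have htG1 : Gpt (a:ℝ) sa j ≤ t' := by linarith
      have htG2 : t' ≤ Gpt (a:ℝ) sa j + 1/(2*(a:ℝ)) := by linarith
      have hBb : Bd (b:ℝ) sb t' := cover t' (gap_good (a:ℝ) sa j hA t' htG1 htG2) ht3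
      obtain ⟨k3, hk31, hk32⟩ := (bd_iff (b:ℝ) sb t' hB).mp hBb
      have hgt : Lft (b:ℝ) sb k1 < Lft (b:ℝ) sb k3 := by linarith
      have hstep := lft_gap (b:ℝ) sb k1 k3 hB hgt
      linarith
    obtain ⟨z0, hz01, hz02, hz03⟩ := escape (c:ℝ) sc (Gpt (a:ℝ) sa j) hC
    have hz0g : z0 ≤ Gpt (a:ℝ) sa j + 1/(2*(a:ℝ)) := by linarith
    have hBb0 : Bd (b:ℝ) sb z0 := cover z0 (gap_good (a:ℝ) sa j hA z0 hz01 hz0g) hz03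
    obtain ⟨k, hk1, hk2⟩ := (bd_iff (b:ℝ) sb z0 hB).mp hBb0
    have Phi : ∀ z, Gpt (a:ℝ) sa j ≤ z → z ≤ Gpt (a:ℝ) sa j + 1/(2*(a:ℝ)) → ¬ Bd (c:ℝ) sc z →
        Lft (b:ℝ) sb k < z ∧ z < Lft (b:ℝ) sb k + 1/(2*(b:ℝ)) := by
      intro z hz1 hz2 hz3
      have hBbz : Bd (b:ℝ) sb z := cover z (gap_good (a:ℝ) sa j hA z hz1 hz2) hz3
      obtain ⟨k', hk'1, hk'2⟩ := (bd_iff (b:ℝ) sb z hB).mp hBbz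
      rcases lt_trichotomy k k' with h | h | h
      · exfalso
        have hmono := lft_mono (b:ℝ) sb k k' hB h
        have hstep := lft_gap (b:ℝ) sb k k' hB hmono
        exact bridge k (by linarith) (by linarith)
      · subst h
        exact ⟨hk'1, hk'2⟩
      · exfalso
        have hmono := lft_mono (b:ℝ) sb k' k hB h
        have hstep := lft_gap (b:ℝ) sb k' k hB hmono
        exact bridge k' (by linarith) (by linarith)
    obtain ⟨zR, hzR1, hzR2, hzR3⟩ := escape (c:ℝ) sc (Gpt (a:ℝ) sa j + 1/(2*(a:ℝ)) - 1/(2*(c:ℝ))) hC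
    have h1 : Gpt (a:ℝ) sa j ≤ zR := by linarith
    have h2 : zR ≤ Gpt (a:ℝ) sa j + 1/(2*(a:ℝ)) := by linarith
    have hzRp := (Phi zR h1 h2 hzR3).2
    exact ⟨k, by linarith, by linarith, Phi⟩
  choose k hk1 hk2 hk3 using gapStruct
  have hbez := Nat.gcd_eq_gcd_ab a b
  have hg0 : 0 < Nat.gcd a b := Nat.gcd_pos_of_pos_left b ha
  have hgR : (0:ℝ) < (Nat.gcd a b : ℝ) := by exact_mod_cast hg0
  -- canonical representation of theta
  have theta_repr : ∀ j : ℤ, Lft (b:ℝ) sb (k j) - Gpt (a:ℝ) sa j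
      = (-(1/4 + sb)/(b:ℝ) - (1/4 - sa)/(a:ℝ)) + ((k j * a - j * b : ℤ):ℝ)/((a:ℝ)*(b:ℝ)) := by
    intro j
    unfold Lft Gpt
    push_cast
    field_simp
    ring
  -- fitting argument for theta residues
  have H1 : ∀ d : ℤ, ∃ x, (1/(2*(a:ℝ)) - 1/(2*(b:ℝ)) - 1/(2*(c:ℝ))) < x ∧ x < 1/(2*(c:ℝ)) ∧
      ∃ n : ℤ, x = (-(1/4 + sb)/(b:ℝ) - (1/4 - sa)/(a:ℝ))
        + d * ((Nat.gcd a b : ℝ)/((a:ℝ)*(b:ℝ))) + n * (1/(b:ℝ)) := by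
    intro d
    refine ⟨Lft (b:ℝ) sb (k (-(d * Nat.gcdB a b))) - Gpt (a:ℝ) sa (-(d * Nat.gcdB a b)),
      by linarith [hk1 (-(d * Nat.gcdB a b))], by linarith [hk2 (-(d * Nat.gcdB a b))],
      k (-(d * Nat.gcdB a b)) - d * Nat.gcdA a b, ?_⟩
    rw [theta_repr]
    have hZ : (k (-(d * Nat.gcdB a b)) * a - (-(d * Nat.gcdB a b)) * b : ℤ)
        = d * (Nat.gcd a b : ℤ) + a * (k (-(d * Nat.gcdB a b)) - d * Nat.gcdA a b) := by
      linear_combination (-d) * hbez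
    rw [hZ]
    push_cast
    field_simp
    ring
  have R1 := fit (1/(b:ℝ)) ((Nat.gcd a b : ℝ)/((a:ℝ)*(b:ℝ)))
    (-(1/4 + sb)/(b:ℝ) - (1/4 - sa)/(a:ℝ))
    (1/(2*(a:ℝ)) - 1/(2*(b:ℝ)) - 1/(2*(c:ℝ))) (1/(2*(c:ℝ)))
    (by positivity) (by positivity) (by linarith) H1
  -- convert R1 to a natural-number inequality
  have e1 : (1/(b:ℝ) - (Nat.gcd a b : ℝ)/((a:ℝ)*(b:ℝ))) * (2*(a:ℝ)*(b:ℝ)*(c:ℝ))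
      = 2*(a:ℝ)*(c:ℝ) - 2*(c:ℝ)*(Nat.gcd a b : ℝ) := by
    field_simp
  have e2 : (1/(2*(c:ℝ)) - (1/(2*(a:ℝ)) - 1/(2*(b:ℝ)) - 1/(2*(c:ℝ)))) * (2*(a:ℝ)*(b:ℝ)*(c:ℝ))
      = 2*(a:ℝ)*(b:ℝ) + (a:ℝ)*(c:ℝ) - (b:ℝ)*(c:ℝ) := by
    field_simp
    ring
  have R1' : 2*(a:ℝ)*(c:ℝ) - 2*(c:ℝ)*(Nat.gcd a b : ℝ)
      < 2*(a:ℝ)*(b:ℝ) + (a:ℝ)*(c:ℝ) - (b:ℝ)*(c:ℝ) := by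
    rw [← e1, ← e2]
    exact mul_lt_mul_of_pos_right R1 (by positivity)
  have natR1 : a*c + b*c < 2*(a*b) + 2*(c*Nat.gcd a b) := by
    have hr : ((a*c + b*c : ℕ):ℝ) < ((2*(a*b) + 2*(c*Nat.gcd a b) : ℕ):ℝ) := by
      push_cast
      linarith
    exact_mod_cast hr
  -- b = a + gcd
  have hdvda : Nat.gcd a b ∣ a := Nat.gcd_dvd_left a b
  have hdvdb : Nat.gcd a b ∣ b := Nat.gcd_dvd_right a b
  have hbag : b = a + Nat.gcd a b := by
    have h1 : Nat.gcd a b ∣ b - a := Nat.dvd_sub hdvdb hdvda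
    have h2 : b - a < 2 * Nat.gcd a b := by
      by_contra h3
      push_neg at h3
      have h4 : a + 2 * Nat.gcd a b ≤ b := by omega
      have h5 : (a + 2 * Nat.gcd a b) * c ≤ b * c := Nat.mul_le_mul_right c h4
      have h6 : 2*(a*b) < 2*(a*c) := by
        have : a*b < a*c := by
          apply Nat.mul_lt_mul_of_le_of_lt (le_refl a) hbc ha
        omega
      nlinarith [natR1, h5, h6]
    obtain ⟨x, hx⟩ := h1
    have hxpos : 1 ≤ x := by
      rcases Nat.eq_zero_or_pos x with h | h
      · rw [h, Nat.mul_zero] at hx; omega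
      · exact h
    have hx2 : x < 2 := by
      by_contra h3
      push_neg at h3
      have : Nat.gcd a b * 2 ≤ Nat.gcd a b * x := Nat.mul_le_mul_left _ h3
      omega
    have : x = 1 := by omega
    rw [this, Nat.mul_one] at hx
    omega
  rcases Nat.lt_or_ge (Nat.gcd a b) 2 with hg1 | hg2
  · -- gcd = 1, so b = a+1; then a = 1, b = 2, c = 3
    have hgcd1 : Nat.gcd a b = 1 := by omega
    have hb2 : b = a + 1 := by omega
    have ha1 : a = 1 := by
      by_contra hnot
      have h2 : 2 ≤ a := by omega
      have hcge : a + 2 ≤ c := by omega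
      rw [hgcd1, hb2] at natR1
      zify at natR1 h2 hcge
      nlinarith [mul_nonneg (by linarith : (0:ℤ) ≤ 2*(a:ℤ)-1)
        (by linarith : (0:ℤ) ≤ (c:ℤ) - (a:ℤ) - 2)]
    have hbv : b = 2 := by omega
    have hcv : c = 3 := by
      rw [hgcd1, ha1, hbv] at natR1
      omega
    subst ha1; subst hbv; subst hcv
    -- endgame for (1,2,3)
    have hk1' := hk1 0
    have hk2' := hk2 0
    push_cast at hk1' hk2'
    -- θ ∈ (1/12, 1/6)
    have hθ1 : Gpt 1 sa 0 + 1/12 < Lft 2 sb (k 0) := by linarith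
    have hθ2 : Lft 2 sb (k 0) < Gpt 1 sa 0 + 1/6 := by linarith
    have Phi : ∀ z, Gpt 1 sa 0 ≤ z → z ≤ Gpt 1 sa 0 + 1/2 → ¬ Bd 3 sc z →
        Lft 2 sb (k 0) < z ∧ z < Lft 2 sb (k 0) + 1/4 := by
      intro z h1 h2 h3
      have := hk3 0 z (by push_cast; exact h1) (by push_cast; linarith) (by push_cast; exact h3)
      push_cast at this
      constructor <;> linarith [this.1, this.2]
    have hGc : Bd 3 sc (Gpt 1 sa 0) := by
      by_contra h
      have := (Phi (Gpt 1 sa 0) le_rfl (by linarith) h).1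
      linarith
    have hGc' : Bd ((3:ℕ):ℝ) sc (Gpt 1 sa 0) := by push_cast; exact hGc
    obtain ⟨mu, hu1, hu2⟩ := (bd_iff ((3:ℕ):ℝ) sc (Gpt 1 sa 0) (by positivity)).mp hGc'
    push_cast at hu1 hu2
    -- u := Lft 3 sc mu ; u < G < u + 1/6
    have hup : Lft 2 sb (k 0) < Lft 3 sc mu + 1/6 := by
      by_contra h
      push_neg at h
      have h3 : ¬ Bd 3 sc (Lft 3 sc mu + 1/6) := by
        have := rgt_good ((3:ℕ):ℝ) sc mu (by positivity)
        push_cast at this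
        convert this using 3
        norm_num
      have := (Phi (Lft 3 sc mu + 1/6) (by linarith) (by linarith) h3).1
      linarith
    have hFc : Bd 3 sc (Gpt 1 sa 0 + 1/2) := by
      by_contra h
      have := (Phi (Gpt 1 sa 0 + 1/2) (by linarith) le_rfl h).2
      linarith
    have hFc' : Bd ((3:ℕ):ℝ) sc (Gpt 1 sa 0 + 1/2) := by push_cast; exact hFc
    obtain ⟨mw, hw1, hw2⟩ := (bd_iff ((3:ℕ):ℝ) sc (Gpt 1 sa 0 + 1/2) (by positivity)).mp hFc'
    push_cast at hw1 hw2
    have hwp : Lft 3 sc mw < Lft 2 sb (k 0) + 1/4 := by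
      by_contra h
      push_neg at h
      have h3 : ¬ Bd 3 sc (Lft 3 sc mw) := by
        have := lft_good ((3:ℕ):ℝ) sc mw (by positivity)
        push_cast at this
        exact this
      have := (Phi (Lft 3 sc mw) (by linarith) (by linarith) h3).2
      linarith
    have hD : Lft 3 sc mw - Lft 3 sc mu = ((mw - mu:ℤ):ℝ)/3 := by
      have := lft_diff ((3:ℕ):ℝ) sc mu mw (by positivity)
      push_cast at this
      push_cast
      linarith
    have hlow : (1:ℝ)/3 < Lft 3 sc mw - Lft 3 sc mu := by linarith
    have hhigh : Lft 3 sc mw - Lft 3 sc mu < 5/12 := by linarith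
    rw [hD] at hlow hhigh
    have hZ1 : (1:ℝ) < ((mw - mu:ℤ):ℝ) := by linarith
    have hZ2 : ((mw - mu:ℤ):ℝ) < 2 := by linarith
    have hZ3 : (1:ℤ) < mw - mu := by exact_mod_cast hZ1
    have hZ4 : (mw - mu:ℤ) < 2 := by exact_mod_cast hZ2
    omega
  · -- gcd ≥ 2 branch
    set g := Nat.gcd a b with hgdef
    have hγα : 1/(2*(c:ℝ)) < 1/(2*(a:ℝ)) := by linarith
    have hgc1 : Nat.gcd g c = 1 := hg (Nat.gcd g c)
      (dvd_trans (Nat.gcd_dvd_left g c) hdvda)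
      (dvd_trans (Nat.gcd_dvd_left g c) hdvdb)
      (Nat.gcd_dvd_right g c)
    obtain ⟨a', haa⟩ := hdvda
    have ha'0 : 0 < a' := by
      rcases Nat.eq_zero_or_pos a' with h | h
      · rw [h, Nat.mul_zero] at haa; omega
      · exact h
    have hba' : b = g * (a' + 1) := by rw [hbag, haa]; ring
    have hAr : (a:ℝ) = (g:ℝ) * (a':ℝ) := by exact_mod_cast haa
    have hBr : (b:ℝ) = (g:ℝ) * ((a':ℝ) + 1) := by rw [hba']; push_cast; ring
    have ha'R : (0:ℝ) < (a':ℝ) := by exact_mod_cast ha'0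
    have h1C : (1:ℝ)/(c:ℝ) = 2*(1/(2*(c:ℝ))) := by ring
    have hbez2 := Nat.gcd_eq_gcd_ab g c
    rw [hgc1] at hbez2
    push_cast at hbez2
    -- theta is constant along the subfamily of gaps
    have thetaconst : ∀ i : ℤ, Lft (b:ℝ) sb (k ((a':ℤ)*i)) - Gpt (a:ℝ) sa ((a':ℤ)*i)
        = Lft (b:ℝ) sb (k 0) - Gpt (a:ℝ) sa 0 := by
      intro i
      have hdiff : (Lft (b:ℝ) sb (k ((a':ℤ)*i)) - Gpt (a:ℝ) sa ((a':ℤ)*i))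
          - (Lft (b:ℝ) sb (k 0) - Gpt (a:ℝ) sa 0)
          = ((k ((a':ℤ)*i) - k 0 - i*((a':ℤ)+1) : ℤ):ℝ) / (b:ℝ) := by
        unfold Lft Gpt
        push_cast
        rw [hAr, hBr]
        field_simp
        ring
      have hwin : |(Lft (b:ℝ) sb (k ((a':ℤ)*i)) - Gpt (a:ℝ) sa ((a':ℤ)*i))
          - (Lft (b:ℝ) sb (k 0) - Gpt (a:ℝ) sa 0)| < 1/(b:ℝ) := by
        rw [abs_lt]
        have w1 := hk1 ((a':ℤ)*i)
        have w2 := hk2 ((a':ℤ)*i)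
        have w3 := hk1 0
        have w4 := hk2 0
        constructor <;> linarith
      rw [hdiff] at hwin
      have hn : (k ((a':ℤ)*i) - k 0 - i*((a':ℤ)+1) : ℤ) = 0 := by
        by_contra hne
        have h5 : (1:ℤ) ≤ |k ((a':ℤ)*i) - k 0 - i*((a':ℤ)+1)| := Int.one_le_abs hne
        have h5' : (1:ℝ) ≤ |((k ((a':ℤ)*i) - k 0 - i*((a':ℤ)+1) : ℤ):ℝ)| := by
          exact_mod_cast h5
        rw [abs_div, abs_of_pos hB] at hwin
        have h7 := mul_lt_mul_of_pos_right hwin hB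
        rw [div_mul_cancel₀ _ hB.ne', one_div_mul_cancel hB.ne'] at h7
        linarith
      rw [hn] at hdiff
      norm_num at hdiff
      linarith
    rcases le_or_gt 0 (Lft (b:ℝ) sb (k 0) - Gpt (a:ℝ) sa 0) with hpos | hneg
    · -- θ0 ≥ 0 : use left endpoints of gaps
      have hθγ : Lft (b:ℝ) sb (k 0) - Gpt (a:ℝ) sa 0 < 1/(2*(c:ℝ)) := by
        have := hk2 0; linarith
      have H2 : ∀ d : ℤ, ∃ x,
          (Lft (b:ℝ) sb (k 0) - Gpt (a:ℝ) sa 0) - 1/(2*(c:ℝ)) < x ∧ x < 0 ∧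
          ∃ n : ℤ, x = (-(1/4 + sc)/(c:ℝ) - Gpt (a:ℝ) sa 0)
            + d * (1/((g:ℝ)*(c:ℝ))) + n * (1/(c:ℝ)) := by
        intro d
        set i : ℤ := -(d * Nat.gcdB g c) with hidef
        have hpj : Lft (b:ℝ) sb (k ((a':ℤ)*i))
            = Gpt (a:ℝ) sa ((a':ℤ)*i) + (Lft (b:ℝ) sb (k 0) - Gpt (a:ℝ) sa 0) := by
          have := thetaconst i
          linarith
        have hec : Bd (c:ℝ) sc (Gpt (a:ℝ) sa ((a':ℤ)*i)) := by
          by_contra h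
          have := (hk3 ((a':ℤ)*i) (Gpt (a:ℝ) sa ((a':ℤ)*i)) le_rfl (by linarith) h).1
          linarith [hpj, hpos]
        obtain ⟨mi, hui1, hui2⟩ := (bd_iff (c:ℝ) sc _ hC).mp hec
        have hupj : Lft (b:ℝ) sb (k ((a':ℤ)*i)) < Lft (c:ℝ) sc mi + 1/(2*(c:ℝ)) := by
          by_contra h
          push_neg at h
          have h1 : Gpt (a:ℝ) sa ((a':ℤ)*i) ≤ Lft (c:ℝ) sc mi + 1/(2*(c:ℝ)) := hui2.le
          have h2 : Lft (c:ℝ) sc mi + 1/(2*(c:ℝ)) ≤ Gpt (a:ℝ) sa ((a':ℤ)*i) + 1/(2*(a:ℝ)) := by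
            linarith [hpj, hθγ, h]
          have := (hk3 ((a':ℤ)*i) _ h1 h2 (rgt_good (c:ℝ) sc mi hC)).1
          linarith
        refine ⟨Lft (c:ℝ) sc mi - Gpt (a:ℝ) sa ((a':ℤ)*i),
          by linarith [hpj, hupj], by linarith [hui1], mi - d * Nat.gcdA g c, ?_⟩
        have hstep : Lft (c:ℝ) sc mi - Gpt (a:ℝ) sa ((a':ℤ)*i)
            = (-(1/4 + sc)/(c:ℝ) - Gpt (a:ℝ) sa 0) + ((mi * g - i * c : ℤ):ℝ)/((g:ℝ)*(c:ℝ)) := by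
          unfold Lft Gpt
          push_cast
          rw [hAr]
          field_simp
          ring
        have hZ2 : (mi * g - i * c : ℤ) = d + g * (mi - d * Nat.gcdA g c) := by
          rw [hidef]
          linear_combination (-d) * hbez2
        rw [hstep, hZ2]
        push_cast
        field_simp
        ring
      have hfit := fit (1/(c:ℝ)) (1/((g:ℝ)*(c:ℝ)))
        (-(1/4 + sc)/(c:ℝ) - Gpt (a:ℝ) sa 0)
        ((Lft (b:ℝ) sb (k 0) - Gpt (a:ℝ) sa 0) - 1/(2*(c:ℝ))) 0
        (by positivity) (by positivity) (by linarith [hpos, h1C]) H2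
      have hgc2 : 1/((g:ℝ)*(c:ℝ)) ≤ 1/(2*(c:ℝ)) := by
        apply one_div_le_one_div_of_le (by positivity)
        have h2g : (2:ℝ) ≤ (g:ℝ) := by exact_mod_cast hg2
        nlinarith
      linarith [hfit, hpos, h1C, hgc2]
    · -- θ0 < 0 : use right endpoints of gaps
      have H3 : ∀ d : ℤ, ∃ x,
          -(1/(2*(c:ℝ))) < x ∧
          x < (Lft (b:ℝ) sb (k 0) - Gpt (a:ℝ) sa 0) + 1/(2*(b:ℝ)) - 1/(2*(a:ℝ)) ∧
          ∃ n : ℤ, x = (-(1/4 + sc)/(c:ℝ) - Gpt (a:ℝ) sa 0 - 1/(2*(a:ℝ)))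
            + d * (1/((g:ℝ)*(c:ℝ))) + n * (1/(c:ℝ)) := by
        intro d
        set i : ℤ := -(d * Nat.gcdB g c) with hidef
        have hpj : Lft (b:ℝ) sb (k ((a':ℤ)*i))
            = Gpt (a:ℝ) sa ((a':ℤ)*i) + (Lft (b:ℝ) sb (k 0) - Gpt (a:ℝ) sa 0) := by
          have := thetaconst i
          linarith
        have hfj : Bd (c:ℝ) sc (Gpt (a:ℝ) sa ((a':ℤ)*i) + 1/(2*(a:ℝ))) := by
          by_contra h
          have := (hk3 ((a':ℤ)*i) (Gpt (a:ℝ) sa ((a':ℤ)*i) + 1/(2*(a:ℝ)))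
            (by linarith) le_rfl h).2
          linarith [hpj, hβα, hneg]
        obtain ⟨mi, hw1, hw2⟩ := (bd_iff (c:ℝ) sc _ hC).mp hfj
        have hwp : Lft (c:ℝ) sc mi < Lft (b:ℝ) sb (k ((a':ℤ)*i)) + 1/(2*(b:ℝ)) := by
          by_contra h
          push_neg at h
          have hk1j := hk1 ((a':ℤ)*i)
          have h1 : Gpt (a:ℝ) sa ((a':ℤ)*i) ≤ Lft (c:ℝ) sc mi := by linarith
          have h2 : Lft (c:ℝ) sc mi ≤ Gpt (a:ℝ) sa ((a':ℤ)*i) + 1/(2*(a:ℝ)) := hw1.le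
          have := (hk3 ((a':ℤ)*i) _ h1 h2 (lft_good (c:ℝ) sc mi hC)).2
          linarith
        refine ⟨Lft (c:ℝ) sc mi - (Gpt (a:ℝ) sa ((a':ℤ)*i) + 1/(2*(a:ℝ))),
          by linarith [hw2], by linarith [hwp, hpj], mi - d * Nat.gcdA g c, ?_⟩
        have hstep : Lft (c:ℝ) sc mi - (Gpt (a:ℝ) sa ((a':ℤ)*i) + 1/(2*(a:ℝ)))
            = (-(1/4 + sc)/(c:ℝ) - Gpt (a:ℝ) sa 0 - 1/(2*(a:ℝ)))
              + ((mi * g - i * c : ℤ):ℝ)/((g:ℝ)*(c:ℝ)) := by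
          unfold Lft Gpt
          push_cast
          rw [hAr]
          field_simp
          ring
        have hZ2 : (mi * g - i * c : ℤ) = d + g * (mi - d * Nat.gcdA g c) := by
          rw [hidef]
          linear_combination (-d) * hbez2
        rw [hstep, hZ2]
        push_cast
        field_simp
        ring
      have hfit := fit (1/(c:ℝ)) (1/((g:ℝ)*(c:ℝ)))
        (-(1/4 + sc)/(c:ℝ) - Gpt (a:ℝ) sa 0 - 1/(2*(a:ℝ)))
        (-(1/(2*(c:ℝ))))
        ((Lft (b:ℝ) sb (k 0) - Gpt (a:ℝ) sa 0) + 1/(2*(b:ℝ)) - 1/(2*(a:ℝ)))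
        (by positivity) (by positivity) (by linarith [hneg, hβα, h1C]) H3
      have hgc2 : 1/((g:ℝ)*(c:ℝ)) ≤ 1/(2*(c:ℝ)) := by
        apply one_div_le_one_div_of_le (by positivity)
        have h2g : (2:ℝ) ≤ (g:ℝ) := by exact_mod_cast hg2
        nlinarith
      linarith [hfit, hneg, h1C, hgc2, hβα]

private lemma conv (v : ℕ) (s t : ℝ) (h : ¬ Bd (v:ℝ) s t) : 1/4 ≤ dnn (s + t * v) := by
  unfold dnn
  apply le_ciInf
  intro m
  by_contra h2
  push_neg at h2
  exact h ⟨m, h2⟩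

theorem stmt_9 (v₁ v₂ v₃ : ℕ) (h₁ : 0 < v₁) (h₂ : 0 < v₂) (h₃ : 0 < v₃)
    (hne₁₂ : v₁ ≠ v₂) (hne₁₃ : v₁ ≠ v₃) (hne₂₃ : v₂ ≠ v₃)
    (hgcd : Nat.gcd (Nat.gcd v₁ v₂) v₃ = 1) (s₁ s₂ s₃ : ℝ) :
    ∃ t : ℝ, 1 / 4 ≤ dnn (s₁ + t * v₁) ∧ 1 / 4 ≤ dnn (s₂ + t * v₂) ∧
      1 / 4 ≤ dnn (s₃ + t * v₃) := by
  have hdvd : ∀ d : ℕ, d ∣ v₁ → d ∣ v₂ → d ∣ v₃ → d = 1 := by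
    intro d ha hb hc
    exact Nat.dvd_one.mp (hgcd ▸ Nat.dvd_gcd (Nat.dvd_gcd ha hb) hc)
  rcases lt_trichotomy v₁ v₂ with h12 | h12 | h12
  · rcases lt_trichotomy v₂ v₃ with h23 | h23 | h23
    · obtain ⟨t, ha, hb, hc⟩ := key v₁ v₂ v₃ h₁ h12 h23
        (fun d d1 d2 d3 => hdvd d d1 d2 d3) s₁ s₂ s₃
      exact ⟨t, conv _ _ _ ha, conv _ _ _ hb, conv _ _ _ hc⟩
    · exact absurd h23 hne₂₃
    · rcases lt_trichotomy v₁ v₃ with h13 | h13 | h13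
      · obtain ⟨t, ha, hc, hb⟩ := key v₁ v₃ v₂ h₁ h13 h23
          (fun d d1 d3 d2 => hdvd d d1 d2 d3) s₁ s₃ s₂
        exact ⟨t, conv _ _ _ ha, conv _ _ _ hb, conv _ _ _ hc⟩
      · exact absurd h13 hne₁₃
      · obtain ⟨t, hc, ha, hb⟩ := key v₃ v₁ v₂ h₃ h13 h12
          (fun d d3 d1 d2 => hdvd d d1 d2 d3) s₃ s₁ s₂
        exact ⟨t, conv _ _ _ ha, conv _ _ _ hb, conv _ _ _ hc⟩
  · exact absurd h12 hne₁₂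
  · rcases lt_trichotomy v₁ v₃ with h13 | h13 | h13
    · obtain ⟨t, hb, ha, hc⟩ := key v₂ v₁ v₃ h₂ h12 h13
        (fun d d2 d1 d3 => hdvd d d1 d2 d3) s₂ s₁ s₃
      exact ⟨t, conv _ _ _ ha, conv _ _ _ hb, conv _ _ _ hc⟩
    · exact absurd h13 hne₁₃
    · rcases lt_trichotomy v₂ v₃ with h23 | h23 | h23
      · obtain ⟨t, hb, hc, ha⟩ := key v₂ v₃ v₁ h₂ h23 h13
          (fun d d2 d3 d1 => hdvd d d1 d2 d3) s₂ s₃ s₁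
        exact ⟨t, conv _ _ _ ha, conv _ _ _ hb, conv _ _ _ hc⟩
      · exact absurd h23 hne₂₃
      · obtain ⟨t, hc, hb, ha⟩ := key v₃ v₂ v₁ h₃ h23 h12
          (fun d d3 d2 d1 => hdvd d d1 d2 d3) s₃ s₂ s₁
        exact ⟨t, conv _ _ _ ha, conv _ _ _ hb, conv _ _ _ hc⟩
end

section
/- Let n ≥ 2 and let v₁, …, vₙ be positive integers with gcd(v₁, …, vₙ) = 1. If the function f(t) = min_{1 ≤ i ≤ n} ‖t·vᵢ‖ has a local maximum at a real number t₀, then there exist indices 1 ≤ i < j ≤ n and an integer m such that t₀ = m/(vᵢ + vⱼ). -/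
/-- Auxiliary: the distance to the nearest integer expressed via `Int.fract`. -/
noncomputable def qq (x : ℝ) : ℝ := min (Int.fract x) (1 - Int.fract x)

lemma dnn_eq (x : ℝ) : dnn x = qq x := by
  have hb : BddBelow (Set.range fun m : ℤ => |x - m|) :=
    ⟨0, by rintro y ⟨m, rfl⟩; positivity⟩
  have h0 : (0:ℝ) ≤ Int.fract x := Int.fract_nonneg x
  have h1 : Int.fract x < 1 := Int.fract_lt_one x
  apply le_antisymm
  · apply le_min
    · have := ciInf_le hb (⌊x⌋)
      simpa [dnn, Int.self_sub_floor, abs_of_nonneg h0] using this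
    · have := ciInf_le hb (⌊x⌋ + 1)
      calc dnn x ≤ |x - ((⌊x⌋ + 1 : ℤ):ℝ)| := this
        _ = 1 - Int.fract x := by
            push_cast
            rw [abs_of_nonpos (by have := Int.fract_lt_one x; rw [Int.fract] at this; linarith)]
            rw [Int.fract]; ring
  · apply le_ciInf
    intro m
    have hx : x = ⌊x⌋ + Int.fract x := by rw [Int.fract]; ring
    rcases le_or_gt (m:ℝ) (⌊x⌋:ℝ) with h | h
    · calc qq x ≤ Int.fract x := min_le_left _ _
        _ ≤ x - m := by linarith
        _ ≤ |x - m| := le_abs_self _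
    · have h' : (⌊x⌋:ℝ) + 1 ≤ m := by exact_mod_cast Int.add_one_le_iff.mpr (by exact_mod_cast h)
      calc qq x ≤ 1 - Int.fract x := min_le_right _ _
        _ ≤ -(x - m) := by linarith
        _ ≤ |x - m| := neg_le_abs _

lemma qq_nonneg (x : ℝ) : 0 ≤ qq x :=
  le_min (Int.fract_nonneg x) (by have := Int.fract_lt_one x; linarith)

lemma qq_le_half (x : ℝ) : qq x ≤ 1/2 := by
  rcases le_or_gt (Int.fract x) (1/2) with h | h
  · exact le_trans (min_le_left _ _) h
  · exact le_trans (min_le_right _ _) (by linarith)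

/-- fract of a small positive shift. -/
lemma fract_add_small {x w : ℝ} (hw : 0 ≤ w) (h : Int.fract x + w < 1) :
    Int.fract (x + w) = Int.fract x + w := by
  have hx : x = ⌊x⌋ + Int.fract x := by rw [Int.fract]; ring
  have : x + w = (Int.fract x + w) + (⌊x⌋ : ℝ) := by linarith
  rw [this, Int.fract_add_intCast, Int.fract_eq_self.2 ⟨by have := Int.fract_nonneg x; linarith, h⟩]

lemma fract_sub_small {x w : ℝ} (hw : w ≤ Int.fract x) (h : 0 < w) :
    Int.fract (x - w) = Int.fract x - w := by
  have hx : x = ⌊x⌋ + Int.fract x := by rw [Int.fract]; ring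
  have : x - w = (Int.fract x - w) + (⌊x⌋ : ℝ) := by linarith
  rw [this, Int.fract_add_intCast,
    Int.fract_eq_self.2 ⟨by linarith, by have := Int.fract_lt_one x; linarith⟩]

theorem stmt_14 (n : ℕ) (hn : 2 ≤ n) (v : Fin n → ℕ) (hpos : ∀ i, 0 < v i)
    (hgcd : Finset.univ.gcd v = 1) (t₀ : ℝ)
    (hmax : IsLocalMax (fun t : ℝ => ⨅ i, dnn (t * (v i : ℝ))) t₀) :
    ∃ i j : Fin n, i < j ∧ ∃ m : ℤ, t₀ = (m : ℝ) / ((v i : ℝ) + (v j : ℝ)) := by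
  have hvpos : ∀ i, (0:ℝ) < v i := fun i => by exact_mod_cast hpos i
  haveI : Nonempty (Fin n) := ⟨⟨0, by omega⟩⟩
  -- rewrite everything in terms of qq
  set G : ℝ → ℝ := fun t => ⨅ i, qq (t * (v i : ℝ)) with hG
  have hGd : (fun t : ℝ => ⨅ i, dnn (t * (v i : ℝ))) = G := by
    funext t; simp only [hG, dnn_eq]
  rw [hGd] at hmax
  set c : ℝ := G t₀ with hc
  have hbdd : ∀ t : ℝ, BddBelow (Set.range fun i => qq (t * (v i : ℝ))) := fun t =>
    Finite.bddBelow_range _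
  have hcle : ∀ i, c ≤ qq (t₀ * v i) := fun i => ciInf_le (hbdd t₀) i
  have hach : ∀ t : ℝ, ∃ i, qq (t * (v i : ℝ)) = G t := fun t =>
    exists_eq_ciInf_of_finite
  have hc0 : 0 ≤ c := le_ciInf fun i => qq_nonneg _
  have hchalf : c ≤ 1/2 := by
    obtain ⟨i, hi⟩ := hach t₀
    rw [hc, ← hi]; exact qq_le_half _
  obtain ⟨ε, hε, hloc⟩ := Metric.eventually_nhds_iff.1 hmax
  -- key closing step
  have key : ∀ i j : Fin n, i ≠ j → (∃ M : ℤ, t₀ * ((v i : ℝ) + (v j : ℝ)) = M) →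
      ∃ i j : Fin n, i < j ∧ ∃ m : ℤ, t₀ = (m : ℝ) / ((v i : ℝ) + (v j : ℝ)) := by
    intro i j hij ⟨M, hM⟩
    have hsum : ∀ a b : Fin n, (0:ℝ) < (v a : ℝ) + (v b : ℝ) := fun a b => by
      have := hvpos a; have := hvpos b; linarith
    rcases lt_or_gt_of_ne hij with h | h
    · exact ⟨i, j, h, M, by field_simp [ne_of_gt (hsum i j)] ; linarith⟩
    · exact ⟨j, i, h, M, by rw [add_comm ((v i : ℝ)) _] at hM
                            field_simp [ne_of_gt (hsum j i)]; linarith⟩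
  rcases eq_or_lt_of_le hc0 with hczero | hcpos
  · -- c = 0 :  near t₀ every point satisfies t * v i ∈ ℤ for some i; countability contradiction
    exfalso
    have hcover : Set.Ioo (t₀ - ε) (t₀ + ε) ⊆
        Set.range (fun p : Fin n × ℤ => (p.2 : ℝ) / (v p.1 : ℝ)) := by
      intro t ht
      have hdist : dist t t₀ < ε := by
        rw [Real.dist_eq, abs_lt]; constructor <;> [linarith [ht.1]; linarith [ht.2]]
      have hGt : G t ≤ c := hloc hdist
      obtain ⟨i, hi⟩ := hach t
      have hq0 : qq (t * v i) ≤ 0 := by rw [hi, ← hczero] at *; exact hGt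
      have hfr : Int.fract (t * v i) = 0 := by
        have h1 := Int.fract_lt_one (t * v i)
        have h0 := Int.fract_nonneg (t * v i)
        rcases min_le_iff.1 hq0 with h | h
        · linarith
        · linarith
      have : t * v i = ⌊t * (v i:ℝ)⌋ := by
        have := Int.fract (t * (v i:ℝ))
        rw [Int.fract] at hfr; linarith
      exact ⟨(i, ⌊t * (v i:ℝ)⌋), by
        simp only []
        field_simp [ne_of_gt (hvpos i)]
        linarith⟩
    have hcnt : (Set.Ioo (t₀ - ε) (t₀ + ε)).Countable :=
      (Set.countable_range _).mono hcover
    have := hcnt.measure_zero MeasureTheory.volume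
    rw [Real.volume_Ioo] at this
    have h2 : t₀ + ε - (t₀ - ε) = 2 * ε := by ring
    rw [h2] at this
    have : (0:ℝ) < 2 * ε := by linarith
    simp_all [ENNReal.ofReal_eq_zero]
    linarith
  rcases eq_or_lt_of_le hchalf with hchalf' | hclt
  · -- c = 1/2 : all fractional parts equal 1/2
    have hhalf : ∀ i : Fin n, Int.fract (t₀ * v i) = 1/2 := by
      intro i
      have h := hcle i
      rw [hchalf'] at h
      have h1 := min_le_left (Int.fract (t₀ * v i)) (1 - Int.fract (t₀ * v i))
      have h2 := min_le_right (Int.fract (t₀ * v i)) (1 - Int.fract (t₀ * v i))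
      unfold qq at h; linarith [le_min_iff.1 h]
    have i0 : Fin n := ⟨0, by omega⟩
    have i1 : Fin n := ⟨1, by omega⟩
    refine key ⟨0, by omega⟩ ⟨1, by omega⟩ (by simp [Fin.ext_iff]) ?_
    refine ⟨⌊t₀ * (v ⟨0, by omega⟩ : ℝ)⌋ + ⌊t₀ * (v ⟨1, by omega⟩ : ℝ)⌋ + 1, ?_⟩
    have e0 := hhalf ⟨0, by omega⟩
    have e1 := hhalf ⟨1, by omega⟩
    rw [Int.fract] at e0 e1
    push_cast
    linarith
  · -- 0 < c < 1/2 : the main case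
    set r : Fin n → ℝ := fun i => Int.fract (t₀ * v i) with hr
    have hrc : ∀ i, c ≤ min (r i) (1 - (r i)) := fun i => hcle i
    -- the per-index safety margin
    set e1 : Fin n → ℝ := fun i => if r i ≤ 1/2 ∨ 1 - r i = c then 1 else 1 - r i - c with he1
    set e2 : Fin n → ℝ := fun i => if 1/2 ≤ r i ∨ r i = c then 1 else r i - c with he2
    set b : Fin n → ℝ := fun i =>
      min (min (r i) (1 - r i)) (min (1/2 - c) (min (e1 i) (e2 i))) with hbdef
    have hbpos : ∀ i, 0 < b i := by
      intro i
      have h1 := hrc i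
      have hri : c ≤ r i := le_trans h1 (min_le_left _ _)
      have hri' : c ≤ 1 - r i := le_trans h1 (min_le_right _ _)
      refine lt_min (lt_min (by linarith) (by linarith)) (lt_min (by linarith) (lt_min ?_ ?_))
      · show (0:ℝ) < e1 i
        by_cases h : r i ≤ 1/2 ∨ 1 - r i = c
        · rw [show e1 i = 1 from if_pos h]; norm_num
        · rw [show e1 i = 1 - r i - c from if_neg h]
          push_neg at h
          rcases lt_or_eq_of_le hri' with h' | h'
          · linarith
          · exact absurd h'.symm h.2
      · show (0:ℝ) < e2 i
        by_cases h : 1/2 ≤ r i ∨ r i = c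
        · rw [show e2 i = 1 from if_pos h]; norm_num
        · rw [show e2 i = r i - c from if_neg h]
          push_neg at h
          rcases lt_or_eq_of_le hri with h' | h'
          · linarith
          · exact absurd h'.symm h.2
    -- choose δ
    set δ : ℝ := min (ε/2) (Finset.univ.inf' (by simp [Finset.univ_nonempty]) fun i => b i / (2 * v i)) with hδdef
    have hδpos : 0 < δ := by
      apply lt_min (by linarith)
      rw [Finset.lt_inf'_iff]
      intro i _
      exact div_pos (hbpos i) (by have := hvpos i; linarith)
    have hδless : ∀ i, δ * v i < b i := by
      intro i
      have h1 : δ ≤ b i / (2 * v i) :=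
        le_trans (min_le_right _ _) (Finset.inf'_le _ (Finset.mem_univ i))
      have hv := hvpos i
      have h2 : δ * (2 * v i) ≤ b i := by
        rw [le_div_iff₀ (by linarith : (0:ℝ) < 2 * v i)] at h1; exact h1
      have : δ * v i ≤ b i / 2 := by
        have : δ * v i = (δ * (2 * v i)) / 2 := by ring
        rw [this]; linarith
      linarith [hbpos i]
    have hδb : ∀ i, δ * v i < b i := hδless
    -- unpack the bounds
    have hbound : ∀ i, δ * v i < r i ∧ δ * v i < 1 - r i ∧ δ * v i < 1/2 - c ∧
        δ * v i < e1 i ∧ δ * v i < e2 i := by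
      intro i
      have h := hδb i
      rw [hbdef] at h
      simp only [lt_min_iff] at h
      exact ⟨h.1.1, h.1.2, h.2.1, h.2.2.1, h.2.2.2⟩
    -- right evaluation
    have hright : ∃ j, r j = 1 - c ∧ 1/2 < r j := by
      have hd : dist (t₀ + δ) t₀ < ε := by
        rw [Real.dist_eq]; rw [abs_of_pos (by linarith : (0:ℝ) < t₀ + δ - t₀)]; linarith [min_le_left (ε/2) (Finset.univ.inf' (by simp [Finset.univ_nonempty]) fun i => b i / (2 * v i))]
      have hGt : G (t₀ + δ) ≤ c := hloc hd
      obtain ⟨j, hj⟩ := hach (t₀ + δ)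
      have hw := hbound j
      set w : ℝ := δ * v j with hwdef
      have hwpos : 0 < w := mul_pos hδpos (hvpos j)
      have harg : (t₀ + δ) * (v j : ℝ) = t₀ * v j + w := by ring
      have hfr : Int.fract (t₀ * v j + w) = r j + w :=
        fract_add_small (le_of_lt hwpos) (by show r j + w < 1; have := hw.2.1; linarith)
      have hqle : qq (t₀ * v j + w) ≤ c := by rw [← harg, hj]; exact hGt
      rw [qq, hfr] at hqle
      have hrj := hrc j
      have hrj1 : c ≤ r j := le_trans hrj (min_le_left _ _)
      have hrj2 : c ≤ 1 - r j := le_trans hrj (min_le_right _ _)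
      rcases min_le_iff.1 hqle with h | h
      · exfalso; linarith
      · -- 1 - (r j + w) ≤ c
        have hgt : 1/2 < r j := by
          by_contra hle
          push_neg at hle
          have := hw.2.2.1
          linarith
        have hne : 1 - r j = c := by
          by_contra hne
          have h1 : δ * v j < e1 j := hw.2.2.2.1
          rw [show e1 j = 1 - r j - c from if_neg (by push_neg; exact ⟨by linarith, hne⟩)] at h1
          linarith
        exact ⟨j, by linarith, hgt⟩
    -- left evaluation
    have hleft : ∃ i, r i = c ∧ r i < 1/2 := by
      have hd : dist (t₀ - δ) t₀ < ε := by
        rw [Real.dist_eq]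
        rw [abs_of_neg (by linarith : t₀ - δ - t₀ < 0)]
        have : δ ≤ ε/2 := min_le_left _ _
        linarith
      have hGt : G (t₀ - δ) ≤ c := hloc hd
      obtain ⟨i, hi⟩ := hach (t₀ - δ)
      have hw := hbound i
      set w : ℝ := δ * v i with hwdef
      have hwpos : 0 < w := mul_pos hδpos (hvpos i)
      have harg : (t₀ - δ) * (v i : ℝ) = t₀ * v i - w := by ring
      have hfr : Int.fract (t₀ * v i - w) = r i - w :=
        fract_sub_small (by show w ≤ r i; have := hw.1; linarith) hwpos
      have hqle : qq (t₀ * v i - w) ≤ c := by rw [← harg, hi]; exact hGt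
      rw [qq, hfr] at hqle
      have hri := hrc i
      have hri1 : c ≤ r i := le_trans hri (min_le_left _ _)
      have hri2 : c ≤ 1 - r i := le_trans hri (min_le_right _ _)
      rcases min_le_iff.1 hqle with h | h
      · -- r i - w ≤ c
        have hlt : r i < 1/2 := by
          have := hw.2.2.1; linarith
        have hne : r i = c := by
          by_contra hne
          have h2 : δ * v i < e2 i := hw.2.2.2.2
          rw [show e2 i = r i - c from if_neg (by push_neg; exact ⟨by linarith, hne⟩)] at h2
          linarith
        exact ⟨i, hne, hlt⟩
      · exfalso; linarith
    obtain ⟨j, hj1, hj2⟩ := hright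
    obtain ⟨i, hi1, hi2⟩ := hleft
    have hij : i ≠ j := fun h => by rw [h] at hi2; linarith
    apply key i j hij
    refine ⟨⌊t₀ * (v i : ℝ)⌋ + ⌊t₀ * (v j : ℝ)⌋ + 1, ?_⟩
    have ei : t₀ * v i - ⌊t₀ * (v i:ℝ)⌋ = r i := by
      show _ = Int.fract (t₀ * (v i:ℝ)); exact Int.self_sub_floor _
    have ej : t₀ * v j - ⌊t₀ * (v j:ℝ)⌋ = r j := by
      show _ = Int.fract (t₀ * (v j:ℝ)); exact Int.self_sub_floor _
    push_cast
    linarith [ei, ej, hi1, hj1]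
end

section
/- Fix n ≥ 2. Assume (i) for every choice of n−1 positive real speeds u₁, …, u_{n−1}, one has ML(u₁, …, u_{n−1}) ≥ 1/n, and (ii) for every choice of n positive integer speeds w₁, …, wₙ, either there exist a positive integer s and an integer k with 1 ≤ k ≤ n such that ML(w₁, …, wₙ) = s/(ns + k), or ML(w₁, …, wₙ) ≥ 1/n. Then for every choice of n positive real speeds v₁, …, vₙ, either there exist a positive integer s and an integer k with 1 ≤ k ≤ n such that ML(v₁, …, vₙ) = s/(ns + k), or ML(v₁, …, vₙ) ≥ 1/n. -/
set_option maxHeartbeats 1000000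
set_option linter.unusedSectionVars false
set_option linter.unusedVariables false
set_option linter.unusedTactic false

lemma dnn_bddBelow (x : ℝ) : BddBelow (Set.range fun m : ℤ => |x - m|) :=
  ⟨0, by rintro y ⟨m, rfl⟩; exact abs_nonneg _⟩

lemma dnn_eq_round (x : ℝ) : dnn x = |x - round x| := by
  refine le_antisymm (dnn_le x _) (le_ciInf fun m => ?_)
  rcases eq_or_ne m (round x) with rfl | hm
  · exact le_refl _
  · have h := Int.one_le_abs (sub_ne_zero.mpr hm)
    have h1 : (1:ℝ) ≤ |(m:ℝ) - (round x : ℤ)| := by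
      have : ((1:ℤ):ℝ) ≤ ((|m - round x| : ℤ) : ℝ) := by exact_mod_cast h
      rw [Int.cast_abs] at this
      push_cast at this
      push_cast
      linarith
    have h2 : |x - (round x : ℤ)| ≤ 1/2 := abs_sub_round x
    have h3 : |(m:ℝ) - (round x:ℤ)| ≤ |(m:ℝ) - x| + |x - (round x:ℤ)| := abs_sub_le _ _ _
    have h4 : |(m:ℝ) - x| = |x - (m:ℝ)| := abs_sub_comm _ _
    linarith

lemma dnn_add_int (x : ℝ) (m : ℤ) : dnn (x + m) = dnn x := by
  rw [dnn_eq_round, dnn_eq_round, round_add_intCast]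
  push_cast
  ring_nf

lemma dnn_lip (x y : ℝ) : dnn x ≤ dnn y + |x - y| := by
  rw [dnn_eq_round y]
  calc dnn x ≤ |x - (round y : ℤ)| := dnn_le x _
  _ ≤ |x - y| + |y - (round y:ℤ)| := abs_sub_le _ _ _
  _ = |y - (round y:ℤ)| + |x - y| := add_comm _ _

section MLlemmas

variable {n : ℕ} [Nonempty (Fin n)]

lemma iInf_dnn_bddBelow (f : Fin n → ℝ) : BddBelow (Set.range fun i => dnn (f i)) :=
  ⟨0, by rintro y ⟨i, rfl⟩; exact dnn_nonneg _⟩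

lemma iInf_dnn_le_half (v : Fin n → ℝ) (t : ℝ) : (⨅ i, dnn (t * v i)) ≤ 1/2 :=
  (ciInf_le (iInf_dnn_bddBelow _) (Classical.arbitrary _)).trans (dnn_le_half _)

lemma iInf_dnn_nonneg (v : Fin n → ℝ) (t : ℝ) : 0 ≤ ⨅ i, dnn (t * v i) :=
  le_ciInf fun _ => dnn_nonneg _

lemma ML_bddAbove (v : Fin n → ℝ) : BddAbove (Set.range fun t : ℝ => ⨅ i, dnn (t * v i)) :=
  ⟨1/2, by rintro y ⟨t, rfl⟩; exact iInf_dnn_le_half v t⟩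

lemma le_ML (v : Fin n → ℝ) (t : ℝ) : (⨅ i, dnn (t * v i)) ≤ ML v := le_ciSup (ML_bddAbove v) t

lemma ML_nonneg (v : Fin n → ℝ) : 0 ≤ ML v := (iInf_dnn_nonneg v 0).trans (le_ML v 0)

lemma exists_time (v : Fin n → ℝ) {b : ℝ} (hb : b < ML v) : ∃ t, b < ⨅ i, dnn (t * v i) :=
  exists_lt_of_lt_ciSup hb

lemma ML_le (v : Fin n → ℝ) {a : ℝ} (h : ∀ t, (⨅ i, dnn (t * v i)) ≤ a) : ML v ≤ a :=
  ciSup_le h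

lemma ML_scale (v : Fin n → ℝ) {c : ℝ} (hc : c ≠ 0) : ML (fun i => v i * c) = ML v := by
  apply le_antisymm
  · apply ML_le
    intro t
    have h : (⨅ i, dnn (t * (v i * c))) = ⨅ i, dnn ((t * c) * v i) := by
      apply congrArg; funext i; exact congrArg dnn (by ring)
    rw [h]
    exact le_ML v (t * c)
  · apply ML_le
    intro t
    have h : (⨅ i, dnn (t * v i)) = ⨅ i, dnn ((t / c) * (v i * c)) := by
      apply congrArg; funext i
      refine congrArg dnn ?_
      field_simp
    rw [h]
    exact le_ML (fun i => v i * c) (t / c)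

lemma exists_approx (v : Fin n → ℝ) {ε : ℝ} (hε : 0 < ε) :
    ∃ q : ℕ, 0 < q ∧ ∀ i, dnn ((q : ℝ) * v i) ≤ ε := by
  set N : ℕ := ⌈ε⁻¹⌉₊ + 1 with hN
  have hN0 : 0 < N := Nat.succ_pos _
  have hNpos : (0:ℝ) < N := by exact_mod_cast hN0
  have hNε : ε⁻¹ ≤ (N:ℝ) := (Nat.le_ceil _).trans (by exact_mod_cast Nat.le_succ _)
  have h1N : 1 / (N:ℝ) ≤ ε := by
    rw [div_le_iff₀ hNpos]
    have := mul_le_mul_of_nonneg_left hNε hε.le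
    rw [mul_inv_cancel₀ hε.ne'] at this
    linarith
  have key : ∀ a b : ℕ, a < b →
      (∀ i, (⌊Int.fract ((a:ℝ) * v i) * N⌋₊) = ⌊Int.fract ((b:ℝ) * v i) * N⌋₊) →
      ∀ i, dnn (((b - a : ℕ):ℝ) * v i) ≤ ε := by
    intro a b hab hcell i
    have hcast : ((b - a : ℕ) : ℝ) = (b:ℝ) - (a:ℝ) := by
      push_cast [Nat.cast_sub hab.le]
      ring
    set x := (a:ℝ) * v i with hx
    set y := (b:ℝ) * v i with hy
    have hxy : ((b-a:ℕ):ℝ) * v i = (Int.fract y - Int.fract x) + ((⌊y⌋ - ⌊x⌋ : ℤ) : ℝ) := by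
      rw [hcast]
      simp only [Int.fract]
      push_cast
      ring
    rw [hxy, dnn_add_int]
    have hle := dnn_le (Int.fract y - Int.fract x) 0
    simp only [Int.cast_zero, sub_zero] at hle
    refine hle.trans ?_
    have hfx0 : 0 ≤ Int.fract x := Int.fract_nonneg _
    have hfy0 : 0 ≤ Int.fract y := Int.fract_nonneg _
    have hcx : (⌊Int.fract x * N⌋₊ : ℝ) ≤ Int.fract x * N := Nat.floor_le (by positivity)
    have hcy : (⌊Int.fract y * N⌋₊ : ℝ) ≤ Int.fract y * N := Nat.floor_le (by positivity)
    have hcx' : Int.fract x * N < ⌊Int.fract x * N⌋₊ + 1 := Nat.lt_floor_add_one _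
    have hcy' : Int.fract y * N < ⌊Int.fract y * N⌋₊ + 1 := Nat.lt_floor_add_one _
    have heqc := hcell i
    rw [← hx, ← hy] at heqc
    have h2 : |Int.fract y * N - Int.fract x * N| < 1 := by
      rw [abs_lt]
      constructor
      · rw [heqc] at hcx'
        linarith
      · rw [← heqc] at hcy'
        linarith
    have h3 : |Int.fract y - Int.fract x| * N < 1 := by
      have hr : (Int.fract y - Int.fract x) * (N:ℝ) = Int.fract y * N - Int.fract x * N := by ring
      calc |Int.fract y - Int.fract x| * (N:ℝ)
          = |(Int.fract y - Int.fract x) * (N:ℝ)| := by rw [abs_mul, abs_of_pos hNpos]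
        _ = |Int.fract y * N - Int.fract x * N| := by rw [hr]
        _ < 1 := h2
    have h4 : |Int.fract y - Int.fract x| < 1 / N := by
      rw [lt_div_iff₀ hNpos]
      exact h3
    linarith
  have hfin : ∃ a b : ℕ, a ≠ b ∧
      (fun q : ℕ => fun i : Fin n =>
        (⟨⌊Int.fract ((q:ℝ) * v i) * N⌋₊, by
          rw [Nat.floor_lt (mul_nonneg (Int.fract_nonneg _) hNpos.le)]
          calc Int.fract ((q:ℝ) * v i) * N < 1 * N :=
            mul_lt_mul_of_pos_right (Int.fract_lt_one _) hNpos
          _ = N := one_mul _⟩ : Fin N)) a =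
      (fun q : ℕ => fun i : Fin n =>
        (⟨⌊Int.fract ((q:ℝ) * v i) * N⌋₊, by
          rw [Nat.floor_lt (mul_nonneg (Int.fract_nonneg _) hNpos.le)]
          calc Int.fract ((q:ℝ) * v i) * N < 1 * N :=
            mul_lt_mul_of_pos_right (Int.fract_lt_one _) hNpos
          _ = N := one_mul _⟩ : Fin N)) b :=
    Finite.exists_ne_map_eq_of_infinite _
  obtain ⟨a, b, hne, heq⟩ := hfin
  have heq' : ∀ i, (⌊Int.fract ((a:ℝ) * v i) * N⌋₊) = ⌊Int.fract ((b:ℝ) * v i) * N⌋₊ := by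
    intro i
    have := congrFun heq i
    exact Fin.mk.inj_iff.mp this
  rcases hne.lt_or_gt with h | h
  · exact ⟨b - a, Nat.sub_pos_of_lt h, key a b h heq'⟩
  · exact ⟨a - b, Nat.sub_pos_of_lt h, key b a h (fun i => (heq' i).symm)⟩

end MLlemmas

theorem stmt_16 (n : ℕ) (hn : 2 ≤ n)
    (hLRC : ∀ u : Fin (n - 1) → ℝ, (∀ i, 0 < u i) → ML u ≥ 1 / (n : ℝ))
    (hint : ∀ w : Fin n → ℕ, (∀ i, 0 < w i) →
      (∃ s k : ℕ, 0 < s ∧ 1 ≤ k ∧ k ≤ n ∧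
          ML (fun i => (w i : ℝ)) = (s : ℝ) / ((n : ℝ) * (s : ℝ) + (k : ℝ))) ∨
        ML (fun i => (w i : ℝ)) ≥ 1 / (n : ℝ))
    (v : Fin n → ℝ) (hv : ∀ i, 0 < v i) :
    (∃ s k : ℕ, 0 < s ∧ 1 ≤ k ∧ k ≤ n ∧
        ML v = (s : ℝ) / ((n : ℝ) * (s : ℝ) + (k : ℝ))) ∨
      ML v ≥ 1 / (n : ℝ) := by
  have hn0 : 0 < n := by omega
  haveI : Nonempty (Fin n) := ⟨⟨0, hn0⟩⟩
  by_contra hcon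
  push_neg at hcon
  obtain ⟨h1, h2⟩ := hcon
  -- normalize speeds to be ≥ 1
  set c := Finset.univ.inf' Finset.univ_nonempty v with hc
  have hc0 : 0 < c := by
    rw [hc, Finset.lt_inf'_iff]
    exact fun i _ => hv i
  set v' : Fin n → ℝ := fun i => v i * c⁻¹ with hv'def
  have hML' : ML v' = ML v := ML_scale v (inv_ne_zero hc0.ne')
  have hv'1 : ∀ i, 1 ≤ v' i := by
    intro i
    have hle : c ≤ v i := Finset.inf'_le v (Finset.mem_univ i)
    rw [hv'def]
    calc (1:ℝ) = c * c⁻¹ := (mul_inv_cancel₀ hc0.ne').symm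
    _ ≤ v i * c⁻¹ := mul_le_mul_of_nonneg_right hle (inv_nonneg.mpr hc0.le)
  clear_value v'
  clear_value c
  set β := ML v with hβ
  have hβ0 : 0 ≤ β := ML_nonneg v
  have hnR : (0:ℝ) < n := by exact_mod_cast hn0
  set δ := (1/(n:ℝ) - β)/2 with hδdef
  have hδ0 : 0 < δ := by rw [hδdef]; linarith
  set S₀ := max 1 ⌈((n:ℝ)*δ)⁻¹⌉₊ with hS₀
  set P := (Finset.Icc 1 S₀) ×ˢ (Finset.Icc 1 n) with hP
  have hPne : P.Nonempty := by
    refine ⟨(1,1), ?_⟩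
    rw [hP, Finset.mem_product, Finset.mem_Icc, Finset.mem_Icc]
    exact ⟨⟨le_refl 1, le_max_left 1 _⟩, le_refl 1, hn0⟩
  set val : ℕ × ℕ → ℝ := fun p => (p.1:ℝ)/((n:ℝ)*p.1 + p.2) with hval
  set ρ := P.inf' hPne (fun p => |β - val p|) with hρ
  have hρ0 : 0 < ρ := by
    rw [hρ, Finset.lt_inf'_iff]
    intro p hp
    rw [hP, Finset.mem_product, Finset.mem_Icc, Finset.mem_Icc] at hp
    exact abs_pos.mpr (sub_ne_zero.mpr (h1 p.1 p.2 (by omega) hp.2.1 hp.2.2))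
  set γ := min δ ρ / 4 with hγdef
  have hγ0 : 0 < γ := by
    rw [hγdef]
    have := lt_min hδ0 hρ0
    linarith
  have hγδ : γ ≤ δ := by
    rw [hγdef]
    have := min_le_left δ ρ
    linarith
  clear_value β δ S₀ P val ρ γ
  have hβ' : β - γ < ML v' := by rw [hML']; linarith
  obtain ⟨t0, ht0⟩ := exists_time v' hβ'
  have habs0 : (0:ℝ) < |t0| + 1 := by positivity
  set ε := min (γ / (|t0| + 1)) 4⁻¹ with hεdef
  have hε0 : 0 < ε := lt_min (by positivity) (by norm_num)
  have hεγ : ε ≤ γ := (min_le_left _ _).trans (div_le_self hγ0.le (by linarith [abs_nonneg t0]))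
  have hεt : |t0| * ε ≤ γ := by
    have h5 : ε * (|t0| + 1) ≤ γ := by
      have hm : ε ≤ γ / (|t0| + 1) := min_le_left _ _
      exact (le_div_iff₀ habs0).mp hm
    nlinarith [hε0.le, abs_nonneg t0]
  clear_value ε
  obtain ⟨q, hq0, hqd⟩ := exists_approx v' hε0
  have hq1 : (1:ℝ) ≤ (q:ℝ) := by exact_mod_cast hq0
  have hqv : ∀ i, (1:ℝ) ≤ (q:ℝ) * v' i := by
    intro i
    have := hv'1 i
    nlinarith
  set w : Fin n → ℕ := fun i => (round ((q:ℝ) * v' i)).toNat with hwdef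
  have hround1 : ∀ i, 1 ≤ round ((q:ℝ) * v' i) := by
    intro i
    rw [round_eq, Int.le_floor]
    have := hqv i
    push_cast
    linarith
  have hwpos : ∀ i, 0 < w i := by
    intro i
    rw [hwdef]
    simp only
    have := hround1 i
    omega
  have hwcast : ∀ i, ((w i : ℕ) : ℝ) = ((round ((q:ℝ) * v' i) : ℤ) : ℝ) := by
    intro i
    rw [hwdef]
    simp only
    have h7 : ((round ((q:ℝ) * v' i)).toNat : ℤ) = round ((q:ℝ) * v' i) :=
      Int.toNat_of_nonneg (by linarith [hround1 i])
    exact_mod_cast congrArg (Int.cast : ℤ → ℝ) h7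
  have hwe : ∀ i, |(q:ℝ) * v' i - (w i : ℝ)| ≤ ε := by
    intro i
    rw [hwcast i, ← dnn_eq_round]
    exact hqd i
  set w' : Fin n → ℝ := fun i => ((w i : ℕ) : ℝ) with hw'def
  clear_value w w'
  have hwe' : ∀ i, |(q:ℝ) * v' i - w' i| ≤ ε := by
    intro i
    rw [hw'def]
    exact hwe i
  -- upper bound : ML w' ≤ β + γ
  have hstep : ∀ δ' : ℝ, 0 < δ' → ML w' - δ' - ε ≤ ML v' := by
    intro δ' hδ'
    obtain ⟨t1, ht1⟩ := exists_time w' (show ML w' - δ' < ML w' by linarith)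
    set t := Int.fract t1 with htdef
    have ht01 : 0 ≤ t := Int.fract_nonneg t1
    have ht1' : t < 1 := Int.fract_lt_one t1
    have hfr : (⨅ i, dnn (t * w' i)) = ⨅ i, dnn (t1 * w' i) := by
      apply congrArg; funext i
      have he : t1 * w' i = t * w' i + ((⌊t1⌋ * (w i : ℤ) : ℤ) : ℝ) := by
        rw [htdef]
        simp only [Int.fract, hw'def]
        push_cast
        ring
      rw [he, dnn_add_int]
    have hkey : ∀ i, (⨅ j, dnn (t1 * w' j)) - ε ≤ dnn ((t * q) * v' i) := by
      intro i
      have hl := dnn_lip (t * w' i) ((t * q) * v' i)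
      have hd : |(t * q) * v' i - t * w' i| ≤ ε := by
        have hr : (t * q) * v' i - t * w' i = t * ((q:ℝ) * v' i - w' i) := by ring
        rw [hr, abs_mul]
        have h7 : |t| ≤ 1 := by rw [abs_of_nonneg ht01]; linarith
        calc |t| * |(q:ℝ) * v' i - w' i| ≤ 1 * ε :=
          mul_le_mul h7 (hwe' i) (abs_nonneg _) zero_le_one
        _ = ε := one_mul ε
      have hge : (⨅ j, dnn (t1 * w' j)) ≤ dnn (t * w' i) := by
        rw [← hfr]
        exact ciInf_le (iInf_dnn_bddBelow _) i
      have habs' : |t * w' i - (t * q) * v' i| = |(t * q) * v' i - t * w' i| := abs_sub_comm _ _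
      rw [habs'] at hl
      linarith
    have h8 : (⨅ i, dnn (t1 * w' i)) - ε ≤ ⨅ i, dnn ((t * q) * v' i) := le_ciInf hkey
    have h9 := h8.trans (le_ML v' (t * q))
    linarith
  have hBle : ML w' - ε ≤ ML v' := by
    by_contra hx
    push_neg at hx
    have := hstep ((ML w' - ε - ML v')/2) (by linarith)
    linarith
  have hup : ML w' ≤ β + γ := by
    rw [hML'] at hBle
    linarith
  -- lower bound : β - 2γ ≤ ML w'
  have hdn : β - 2*γ ≤ ML w' := by
    obtain ⟨i₀, hi₀⟩ := Finite.exists_min (fun i => dnn ((t0/(q:ℝ)) * w' i))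
    have hA : (⨅ i, dnn (t0 * v' i)) ≤ dnn (t0 * v' i₀) := ciInf_le (iInf_dnn_bddBelow _) i₀
    have hqR : (0:ℝ) < q := by exact_mod_cast hq0
    have hB : dnn (t0 * v' i₀) ≤ dnn ((t0/(q:ℝ)) * w' i₀) + |t0| * ε := by
      have hl := dnn_lip (t0 * v' i₀) ((t0/(q:ℝ)) * w' i₀)
      have hd : |t0 * v' i₀ - (t0/(q:ℝ)) * w' i₀| ≤ |t0| * ε := by
        have hr : t0 * v' i₀ - (t0/(q:ℝ)) * w' i₀ = (t0/(q:ℝ)) * ((q:ℝ) * v' i₀ - w' i₀) := by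
          field_simp
        rw [hr, abs_mul, abs_div, abs_of_pos hqR]
        calc |t0|/(q:ℝ) * |(q:ℝ) * v' i₀ - w' i₀| ≤ |t0|/(q:ℝ) * ε :=
          mul_le_mul_of_nonneg_left (hwe' i₀) (by positivity)
        _ ≤ |t0| * ε := mul_le_mul_of_nonneg_right (div_le_self (abs_nonneg _) hq1) hε0.le
      linarith
    have hC : dnn ((t0/(q:ℝ)) * w' i₀) ≤ ML w' :=
      (le_ciInf fun j => hi₀ j).trans (le_ML w' (t0/(q:ℝ)))
    linarith
  -- apply the integer-case hypothesis
  rcases hint w hwpos with ⟨s, k, hs, hk1, hkn, heq⟩ | hge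
  · rw [← hw'def] at heq
    have hsR1 : (1:ℝ) ≤ (s:ℝ) := by exact_mod_cast hs
    have hkR1 : (1:ℝ) ≤ (k:ℝ) := by exact_mod_cast hk1
    have hkRn : (k:ℝ) ≤ (n:ℝ) := by exact_mod_cast hkn
    have hvpos : (0:ℝ) < (n:ℝ)*(s:ℝ) + (k:ℝ) := by nlinarith
    have hval_le : (s:ℝ)/((n:ℝ)*(s:ℝ) + (k:ℝ)) ≤ β + δ := by
      rw [← heq]
      linarith
    have hlow : (s:ℝ)/((n:ℝ)*((s:ℝ)+1)) ≤ (s:ℝ)/((n:ℝ)*(s:ℝ) + (k:ℝ)) :=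
      div_le_div_of_nonneg_left (by linarith) hvpos (by nlinarith)
    have hs1 : (s:ℝ)/((n:ℝ)*((s:ℝ)+1)) ≤ 1/(n:ℝ) - δ := by
      have hbd : β + δ = 1/(n:ℝ) - δ := by rw [hδdef]; ring
      linarith
    have hnd0 : (0:ℝ) < (n:ℝ)*δ := by positivity
    have hs2 : (s:ℝ) + 1 ≤ ((n:ℝ)*δ)⁻¹ := by
      have hden : (0:ℝ) < (n:ℝ)*((s:ℝ)+1) := by nlinarith
      rw [div_le_iff₀ hden] at hs1
      have hexp : (1/(n:ℝ) - δ) * ((n:ℝ)*((s:ℝ)+1)) = ((s:ℝ)+1) - ((s:ℝ)+1)*((n:ℝ)*δ) := by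
        field_simp
      rw [hexp] at hs1
      have hkey2 : ((s:ℝ)+1) * ((n:ℝ)*δ) ≤ 1 := by linarith
      calc (s:ℝ)+1 = (((s:ℝ)+1)*((n:ℝ)*δ)) / ((n:ℝ)*δ) := by field_simp
      _ ≤ 1 / ((n:ℝ)*δ) := by gcongr
      _ = ((n:ℝ)*δ)⁻¹ := one_div _
    have hs3 : s ≤ S₀ := by
      have ha : (s:ℝ) ≤ (⌈((n:ℝ)*δ)⁻¹⌉₊ : ℝ) := le_trans (by linarith) (Nat.le_ceil _)
      have hb : s ≤ ⌈((n:ℝ)*δ)⁻¹⌉₊ := by exact_mod_cast ha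
      rw [hS₀]
      exact hb.trans (le_max_right 1 _)
    have hmem : (s, k) ∈ P := by
      rw [hP, Finset.mem_product, Finset.mem_Icc, Finset.mem_Icc]
      exact ⟨⟨hs, hs3⟩, hk1, hkn⟩
    have hinf : ρ ≤ |β - val (s,k)| := by
      rw [hρ]
      exact Finset.inf'_le _ hmem
    have hveq : val (s,k) = (s:ℝ)/((n:ℝ)*(s:ℝ)+(k:ℝ)) := by rw [hval]
    have habs : |β - val (s,k)| ≤ 2*γ := by
      rw [hveq, ← heq, abs_le]
      constructor
      · linarith
      · linarith
    have h2γ : 2*γ < ρ := by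
      rw [hγdef]
      have := min_le_right δ ρ
      linarith
    linarith
  · rw [← hw'def] at hge
    have hbd : β + δ = 1/(n:ℝ) - δ := by rw [hδdef]; ring
    have : (1:ℝ)/(n:ℝ) ≤ β + γ := le_trans hge hup
    linarith
end

section
/- The maximum loneliness of the six positive integer speeds 5, 6, 11, 17, 23, 28 equals 8/51; that is, ML(5, 6, 11, 17, 23, 28) = 8/51. In particular the Loneliness Spectrum Conjecture fails for n = 6, since 8/51 < 1/6 and there is no positive integer s with 8/51 = s/(6s+1). -/
set_option maxHeartbeats 2000000 in

lemma key_s18 (r : ℤ) (hr0 : 0 ≤ r) (hr1 : r < 51) (s : ℝ)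
    (hsl : -(1/2 : ℝ) ≤ s) (hsr : s ≤ 1/2) :
    ∃ v m : ℤ, (v = 5 ∨ v = 6 ∨ v = 11 ∨ v = 17 ∨ v = 23 ∨ v = 28) ∧
      |((r : ℝ) + s) * (v : ℝ) - 51 * (m : ℝ)| ≤ 8 := by
  interval_cases r
  · exact ⟨5, 0, by norm_num, by rw [abs_le]; push_cast; constructor <;> linarith⟩
  · exact ⟨5, 0, by norm_num, by rw [abs_le]; push_cast; constructor <;> linarith⟩
  · rcases le_total s (-2/5 : ℝ) with h0 | h0
    · exact ⟨5, 0, by norm_num, by rw [abs_le]; push_cast; constructor <;> linarith⟩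
    · rcases le_total s (3/28 : ℝ) with h1 | h1
      · exact ⟨28, 1, by norm_num, by rw [abs_le]; push_cast; constructor <;> linarith⟩
      · exact ⟨23, 1, by norm_num, by rw [abs_le]; push_cast; constructor <;> linarith⟩
  · rcases le_total s (-10/23 : ℝ) with h0 | h0
    · exact ⟨23, 1, by norm_num, by rw [abs_le]; push_cast; constructor <;> linarith⟩
    · rcases le_total s (8/17 : ℝ) with h1 | h1
      · exact ⟨17, 1, by norm_num, by rw [abs_le]; push_cast; constructor <;> linarith⟩
      · exact ⟨28, 2, by norm_num, by rw [abs_le]; push_cast; constructor <;> linarith⟩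
  · rcases le_total s (-1/14 : ℝ) with h0 | h0
    · exact ⟨28, 2, by norm_num, by rw [abs_le]; push_cast; constructor <;> linarith⟩
    · exact ⟨11, 1, by norm_num, by rw [abs_le]; push_cast; constructor <;> linarith⟩
  · rcases le_total s (4/11 : ℝ) with h0 | h0
    · exact ⟨11, 1, by norm_num, by rw [abs_le]; push_cast; constructor <;> linarith⟩
    · exact ⟨28, 3, by norm_num, by rw [abs_le]; push_cast; constructor <;> linarith⟩
  · rcases le_total s (-1/4 : ℝ) with h0 | h0
    · exact ⟨28, 3, by norm_num, by rw [abs_le]; push_cast; constructor <;> linarith⟩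
    · rcases le_total s (8/17 : ℝ) with h1 | h1
      · exact ⟨17, 2, by norm_num, by rw [abs_le]; push_cast; constructor <;> linarith⟩
      · exact ⟨23, 3, by norm_num, by rw [abs_le]; push_cast; constructor <;> linarith⟩
  · rcases le_total s (0 : ℝ) with h0 | h0
    · exact ⟨23, 3, by norm_num, by rw [abs_le]; push_cast; constructor <;> linarith⟩
    · exact ⟨28, 4, by norm_num, by rw [abs_le]; push_cast; constructor <;> linarith⟩
  · exact ⟨6, 1, by norm_num, by rw [abs_le]; push_cast; constructor <;> linarith⟩
  · exact ⟨6, 1, by norm_num, by rw [abs_le]; push_cast; constructor <;> linarith⟩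
  · exact ⟨5, 1, by norm_num, by rw [abs_le]; push_cast; constructor <;> linarith⟩
  · exact ⟨5, 1, by norm_num, by rw [abs_le]; push_cast; constructor <;> linarith⟩
  · rcases le_total s (-1/5 : ℝ) with h0 | h0
    · exact ⟨5, 1, by norm_num, by rw [abs_le]; push_cast; constructor <;> linarith⟩
    · rcases le_total s (8/17 : ℝ) with h1 | h1
      · exact ⟨17, 4, by norm_num, by rw [abs_le]; push_cast; constructor <;> linarith⟩
      · exact ⟨28, 7, by norm_num, by rw [abs_le]; push_cast; constructor <;> linarith⟩
  · rcases le_total s (1/28 : ℝ) with h0 | h0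
    · exact ⟨28, 7, by norm_num, by rw [abs_le]; push_cast; constructor <;> linarith⟩
    · exact ⟨23, 6, by norm_num, by rw [abs_le]; push_cast; constructor <;> linarith⟩
  · exact ⟨11, 3, by norm_num, by rw [abs_le]; push_cast; constructor <;> linarith⟩
  · rcases le_total s (-1/7 : ℝ) with h0 | h0
    · exact ⟨28, 8, by norm_num, by rw [abs_le]; push_cast; constructor <;> linarith⟩
    · rcases le_total s (8/17 : ℝ) with h1 | h1
      · exact ⟨17, 5, by norm_num, by rw [abs_le]; push_cast; constructor <;> linarith⟩
      · exact ⟨23, 7, by norm_num, by rw [abs_le]; push_cast; constructor <;> linarith⟩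
  · rcases le_total s (-3/23 : ℝ) with h0 | h0
    · exact ⟨23, 7, by norm_num, by rw [abs_le]; push_cast; constructor <;> linarith⟩
    · exact ⟨6, 2, by norm_num, by rw [abs_le]; push_cast; constructor <;> linarith⟩
  · exact ⟨6, 2, by norm_num, by rw [abs_le]; push_cast; constructor <;> linarith⟩
  · rcases le_total s (1/3 : ℝ) with h0 | h0
    · exact ⟨6, 2, by norm_num, by rw [abs_le]; push_cast; constructor <;> linarith⟩
    · exact ⟨11, 4, by norm_num, by rw [abs_le]; push_cast; constructor <;> linarith⟩
  · rcases le_total s (3/11 : ℝ) with h0 | h0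
    · exact ⟨11, 4, by norm_num, by rw [abs_le]; push_cast; constructor <;> linarith⟩
    · exact ⟨5, 2, by norm_num, by rw [abs_le]; push_cast; constructor <;> linarith⟩
  · exact ⟨5, 2, by norm_num, by rw [abs_le]; push_cast; constructor <;> linarith⟩
  · exact ⟨5, 2, by norm_num, by rw [abs_le]; push_cast; constructor <;> linarith⟩
  · rcases le_total s (0 : ℝ) with h0 | h0
    · exact ⟨5, 2, by norm_num, by rw [abs_le]; push_cast; constructor <;> linarith⟩
    · exact ⟨23, 10, by norm_num, by rw [abs_le]; push_cast; constructor <;> linarith⟩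
  · exact ⟨11, 5, by norm_num, by rw [abs_le]; push_cast; constructor <;> linarith⟩
  · rcases le_total s (-1/28 : ℝ) with h0 | h0
    · exact ⟨28, 13, by norm_num, by rw [abs_le]; push_cast; constructor <;> linarith⟩
    · rcases le_total s (8/17 : ℝ) with h1 | h1
      · exact ⟨17, 8, by norm_num, by rw [abs_le]; push_cast; constructor <;> linarith⟩
      · exact ⟨6, 3, by norm_num, by rw [abs_le]; push_cast; constructor <;> linarith⟩
  · exact ⟨6, 3, by norm_num, by rw [abs_le]; push_cast; constructor <;> linarith⟩
  · exact ⟨6, 3, by norm_num, by rw [abs_le]; push_cast; constructor <;> linarith⟩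
  · rcases le_total s (-1/23 : ℝ) with h0 | h0
    · exact ⟨23, 12, by norm_num, by rw [abs_le]; push_cast; constructor <;> linarith⟩
    · rcases le_total s (8/17 : ℝ) with h1 | h1
      · exact ⟨17, 9, by norm_num, by rw [abs_le]; push_cast; constructor <;> linarith⟩
      · exact ⟨11, 6, by norm_num, by rw [abs_le]; push_cast; constructor <;> linarith⟩
  · exact ⟨11, 6, by norm_num, by rw [abs_le]; push_cast; constructor <;> linarith⟩
  · rcases le_total s (4/23 : ℝ) with h0 | h0
    · exact ⟨23, 13, by norm_num, by rw [abs_le]; push_cast; constructor <;> linarith⟩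
    · exact ⟨5, 3, by norm_num, by rw [abs_le]; push_cast; constructor <;> linarith⟩
  · exact ⟨5, 3, by norm_num, by rw [abs_le]; push_cast; constructor <;> linarith⟩
  · exact ⟨5, 3, by norm_num, by rw [abs_le]; push_cast; constructor <;> linarith⟩
  · rcases le_total s (1/5 : ℝ) with h0 | h0
    · exact ⟨5, 3, by norm_num, by rw [abs_le]; push_cast; constructor <;> linarith⟩
    · exact ⟨11, 7, by norm_num, by rw [abs_le]; push_cast; constructor <;> linarith⟩
  · rcases le_total s (2/11 : ℝ) with h0 | h0
    · exact ⟨11, 7, by norm_num, by rw [abs_le]; push_cast; constructor <;> linarith⟩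
    · exact ⟨6, 4, by norm_num, by rw [abs_le]; push_cast; constructor <;> linarith⟩
  · exact ⟨6, 4, by norm_num, by rw [abs_le]; push_cast; constructor <;> linarith⟩
  · rcases le_total s (1/3 : ℝ) with h0 | h0
    · exact ⟨6, 4, by norm_num, by rw [abs_le]; push_cast; constructor <;> linarith⟩
    · exact ⟨23, 16, by norm_num, by rw [abs_le]; push_cast; constructor <;> linarith⟩
  · rcases le_total s (-4/23 : ℝ) with h0 | h0
    · exact ⟨23, 16, by norm_num, by rw [abs_le]; push_cast; constructor <;> linarith⟩
    · rcases le_total s (8/17 : ℝ) with h1 | h1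
      · exact ⟨17, 12, by norm_num, by rw [abs_le]; push_cast; constructor <;> linarith⟩
      · exact ⟨11, 8, by norm_num, by rw [abs_le]; push_cast; constructor <;> linarith⟩
  · exact ⟨11, 8, by norm_num, by rw [abs_le]; push_cast; constructor <;> linarith⟩
  · rcases le_total s (1/23 : ℝ) with h0 | h0
    · exact ⟨23, 17, by norm_num, by rw [abs_le]; push_cast; constructor <;> linarith⟩
    · exact ⟨28, 21, by norm_num, by rw [abs_le]; push_cast; constructor <;> linarith⟩
  · rcases le_total s (-13/28 : ℝ) with h0 | h0
    · exact ⟨28, 21, by norm_num, by rw [abs_le]; push_cast; constructor <;> linarith⟩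
    · rcases le_total s (8/17 : ℝ) with h1 | h1
      · exact ⟨17, 13, by norm_num, by rw [abs_le]; push_cast; constructor <;> linarith⟩
      · exact ⟨5, 4, by norm_num, by rw [abs_le]; push_cast; constructor <;> linarith⟩
  · exact ⟨5, 4, by norm_num, by rw [abs_le]; push_cast; constructor <;> linarith⟩
  · exact ⟨5, 4, by norm_num, by rw [abs_le]; push_cast; constructor <;> linarith⟩
  · exact ⟨6, 5, by norm_num, by rw [abs_le]; push_cast; constructor <;> linarith⟩
  · exact ⟨6, 5, by norm_num, by rw [abs_le]; push_cast; constructor <;> linarith⟩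
  · rcases le_total s (0 : ℝ) with h0 | h0
    · exact ⟨28, 24, by norm_num, by rw [abs_le]; push_cast; constructor <;> linarith⟩
    · exact ⟨23, 20, by norm_num, by rw [abs_le]; push_cast; constructor <;> linarith⟩
  · rcases le_total s (-7/23 : ℝ) with h0 | h0
    · exact ⟨23, 20, by norm_num, by rw [abs_le]; push_cast; constructor <;> linarith⟩
    · rcases le_total s (8/17 : ℝ) with h1 | h1
      · exact ⟨17, 15, by norm_num, by rw [abs_le]; push_cast; constructor <;> linarith⟩
      · exact ⟨28, 25, by norm_num, by rw [abs_le]; push_cast; constructor <;> linarith⟩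
  · rcases le_total s (-5/28 : ℝ) with h0 | h0
    · exact ⟨28, 25, by norm_num, by rw [abs_le]; push_cast; constructor <;> linarith⟩
    · exact ⟨11, 10, by norm_num, by rw [abs_le]; push_cast; constructor <;> linarith⟩
  · rcases le_total s (1/11 : ℝ) with h0 | h0
    · exact ⟨11, 10, by norm_num, by rw [abs_le]; push_cast; constructor <;> linarith⟩
    · exact ⟨28, 26, by norm_num, by rw [abs_le]; push_cast; constructor <;> linarith⟩
  · rcases le_total s (-5/14 : ℝ) with h0 | h0
    · exact ⟨28, 26, by norm_num, by rw [abs_le]; push_cast; constructor <;> linarith⟩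
    · rcases le_total s (8/17 : ℝ) with h1 | h1
      · exact ⟨17, 16, by norm_num, by rw [abs_le]; push_cast; constructor <;> linarith⟩
      · exact ⟨23, 22, by norm_num, by rw [abs_le]; push_cast; constructor <;> linarith⟩
  · rcases le_total s (3/23 : ℝ) with h0 | h0
    · exact ⟨23, 22, by norm_num, by rw [abs_le]; push_cast; constructor <;> linarith⟩
    · rcases le_total s (13/28 : ℝ) with h1 | h1
      · exact ⟨28, 27, by norm_num, by rw [abs_le]; push_cast; constructor <;> linarith⟩
      · exact ⟨5, 5, by norm_num, by rw [abs_le]; push_cast; constructor <;> linarith⟩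
  · exact ⟨5, 5, by norm_num, by rw [abs_le]; push_cast; constructor <;> linarith⟩




lemma bddBelow_dnn (x : ℝ) : BddBelow (Set.range fun m : ℤ => |x - (m : ℝ)|) :=
  ⟨0, by rintro y ⟨m, rfl⟩; positivity⟩

lemma habs (x : ℝ) (k m : ℤ) (h1 : 8/51 ≤ x - (k:ℝ)) (h2 : 8/51 ≤ ((k:ℝ)+1) - x) :
    (8:ℝ)/51 ≤ |x - (m : ℝ)| := by
  rcases le_or_gt m k with h | h
  · have h' : (m : ℝ) ≤ (k : ℝ) := by exact_mod_cast h
    calc (8:ℝ)/51 ≤ x - k := h1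
      _ ≤ x - m := by linarith
      _ ≤ |x - m| := le_abs_self _
  · have h' : (k : ℝ) + 1 ≤ (m : ℝ) := by exact_mod_cast h
    calc (8:ℝ)/51 ≤ (k:ℝ) + 1 - x := by linarith
      _ ≤ (m:ℝ) - x := by linarith
      _ ≤ |x - m| := by rw [abs_sub_comm]; exact le_abs_self _

theorem stmt_18 :
    ML ![(5 : ℝ), 6, 11, 17, 23, 28] = 8 / 51 ∧ (8 / 51 : ℝ) < 1 / 6 ∧
      ¬ ∃ s : ℕ, 0 < s ∧ (8 / 51 : ℝ) = (s : ℝ) / (6 * (s : ℝ) + 1) := by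
  refine ⟨?_, by norm_num, ?_⟩
  · -- ML = 8/51
    unfold ML
    have hbddI : ∀ t : ℝ, BddBelow (Set.range fun i : Fin 6 =>
        dnn (t * ![(5 : ℝ), 6, 11, 17, 23, 28] i)) := fun t => (Set.finite_range _).bddBelow
    apply le_antisymm
    · -- upper bound
      apply ciSup_le
      intro t
      set n : ℤ := round (51 * t) with hn
      have hs1 : |51 * t - (n : ℝ)| ≤ 1/2 := abs_sub_round (51 * t)
      rw [abs_le] at hs1
      obtain ⟨v, m, hv, hvm⟩ := key_s18 (n % 51) (Int.emod_nonneg n (by norm_num))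
        (Int.emod_lt_of_pos n (by norm_num)) (51 * t - (n : ℝ)) (by linarith [hs1.1]) hs1.2
      set q : ℤ := n / 51 with hq
      have hmod : (n % 51 : ℤ) = n - 51 * q := by omega
      have hmodR : ((n % 51 : ℤ) : ℝ) = (n : ℝ) - 51 * (q : ℝ) := by
        rw [hmod]; push_cast; ring
      rw [hmodR] at hvm
      have main : ∃ i : Fin 6, dnn (t * ![(5 : ℝ), 6, 11, 17, 23, 28] i) ≤ 8/51 := by
        rcases hv with rfl | rfl | rfl | rfl | rfl | rfl
        · refine ⟨0, ?_⟩
          show dnn (t * 5) ≤ 8/51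
          refine le_trans (dnn_le (t * 5) (q * 5 + m)) ?_
          have heq : t * 5 - ((q * 5 + m : ℤ) : ℝ)
              = (((n:ℝ) - 51*(q:ℝ) + (51*t - (n:ℝ))) * ((5:ℤ):ℝ) - 51 * (m:ℝ)) / 51 := by
            push_cast; ring
          rw [heq, abs_div, abs_of_pos (by norm_num : (0:ℝ) < 51)]
          exact (div_le_div_iff_of_pos_right (by norm_num)).mpr hvm
        · refine ⟨1, ?_⟩
          show dnn (t * 6) ≤ 8/51
          refine le_trans (dnn_le (t * 6) (q * 6 + m)) ?_
          have heq : t * 6 - ((q * 6 + m : ℤ) : ℝ)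
              = (((n:ℝ) - 51*(q:ℝ) + (51*t - (n:ℝ))) * ((6:ℤ):ℝ) - 51 * (m:ℝ)) / 51 := by
            push_cast; ring
          rw [heq, abs_div, abs_of_pos (by norm_num : (0:ℝ) < 51)]
          exact (div_le_div_iff_of_pos_right (by norm_num)).mpr hvm
        · refine ⟨2, ?_⟩
          show dnn (t * 11) ≤ 8/51
          refine le_trans (dnn_le (t * 11) (q * 11 + m)) ?_
          have heq : t * 11 - ((q * 11 + m : ℤ) : ℝ)
              = (((n:ℝ) - 51*(q:ℝ) + (51*t - (n:ℝ))) * ((11:ℤ):ℝ) - 51 * (m:ℝ)) / 51 := by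
            push_cast; ring
          rw [heq, abs_div, abs_of_pos (by norm_num : (0:ℝ) < 51)]
          exact (div_le_div_iff_of_pos_right (by norm_num)).mpr hvm
        · refine ⟨3, ?_⟩
          show dnn (t * 17) ≤ 8/51
          refine le_trans (dnn_le (t * 17) (q * 17 + m)) ?_
          have heq : t * 17 - ((q * 17 + m : ℤ) : ℝ)
              = (((n:ℝ) - 51*(q:ℝ) + (51*t - (n:ℝ))) * ((17:ℤ):ℝ) - 51 * (m:ℝ)) / 51 := by
            push_cast; ring
          rw [heq, abs_div, abs_of_pos (by norm_num : (0:ℝ) < 51)]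
          exact (div_le_div_iff_of_pos_right (by norm_num)).mpr hvm
        · refine ⟨4, ?_⟩
          show dnn (t * 23) ≤ 8/51
          refine le_trans (dnn_le (t * 23) (q * 23 + m)) ?_
          have heq : t * 23 - ((q * 23 + m : ℤ) : ℝ)
              = (((n:ℝ) - 51*(q:ℝ) + (51*t - (n:ℝ))) * ((23:ℤ):ℝ) - 51 * (m:ℝ)) / 51 := by
            push_cast; ring
          rw [heq, abs_div, abs_of_pos (by norm_num : (0:ℝ) < 51)]
          exact (div_le_div_iff_of_pos_right (by norm_num)).mpr hvm
        · refine ⟨5, ?_⟩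
          show dnn (t * 28) ≤ 8/51
          refine le_trans (dnn_le (t * 28) (q * 28 + m)) ?_
          have heq : t * 28 - ((q * 28 + m : ℤ) : ℝ)
              = (((n:ℝ) - 51*(q:ℝ) + (51*t - (n:ℝ))) * ((28:ℤ):ℝ) - 51 * (m:ℝ)) / 51 := by
            push_cast; ring
          rw [heq, abs_div, abs_of_pos (by norm_num : (0:ℝ) < 51)]
          exact (div_le_div_iff_of_pos_right (by norm_num)).mpr hvm
      obtain ⟨i, hi⟩ := main
      exact le_trans (ciInf_le (hbddI t) i) hi
    · -- lower bound
      have hbddS : BddAbove (Set.range fun t : ℝ =>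
          ⨅ i, dnn (t * ![(5 : ℝ), 6, 11, 17, 23, 28] i)) := by
        refine ⟨1/2, ?_⟩
        rintro y ⟨t, rfl⟩
        exact le_trans (ciInf_le (hbddI t) 0) (dnn_le_half _)
      refine le_trans ?_ (le_ciSup hbddS (7/51 : ℝ))
      apply le_ciInf
      intro i
      fin_cases i
      · show (8:ℝ)/51 ≤ dnn ((7:ℝ)/51 * 5)
        refine le_ciInf fun m => ?_
        have : (7:ℝ)/51 * 5 = 35/51 := by norm_num
        rw [this]
        exact habs _ 0 m (by norm_num) (by norm_num)
      · show (8:ℝ)/51 ≤ dnn ((7:ℝ)/51 * 6)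
        refine le_ciInf fun m => ?_
        have : (7:ℝ)/51 * 6 = 42/51 := by norm_num
        rw [this]
        exact habs _ 0 m (by norm_num) (by norm_num)
      · show (8:ℝ)/51 ≤ dnn ((7:ℝ)/51 * 11)
        refine le_ciInf fun m => ?_
        have : (7:ℝ)/51 * 11 = 77/51 := by norm_num
        rw [this]
        exact habs _ 1 m (by norm_num) (by norm_num)
      · show (8:ℝ)/51 ≤ dnn ((7:ℝ)/51 * 17)
        refine le_ciInf fun m => ?_
        have : (7:ℝ)/51 * 17 = 119/51 := by norm_num
        rw [this]
        exact habs _ 2 m (by norm_num) (by norm_num)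
      · show (8:ℝ)/51 ≤ dnn ((7:ℝ)/51 * 23)
        refine le_ciInf fun m => ?_
        have : (7:ℝ)/51 * 23 = 161/51 := by norm_num
        rw [this]
        exact habs _ 3 m (by norm_num) (by norm_num)
      · show (8:ℝ)/51 ≤ dnn ((7:ℝ)/51 * 28)
        refine le_ciInf fun m => ?_
        have : (7:ℝ)/51 * 28 = 196/51 := by norm_num
        rw [this]
        exact habs _ 3 m (by norm_num) (by norm_num)
  · -- no s with 8/51 = s/(6s+1)
    rintro ⟨s, hs0, h⟩
    have hpos : (0:ℝ) < 6 * (s:ℝ) + 1 := by positivity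
    rw [div_eq_div_iff (by norm_num : (51:ℝ) ≠ 0) (ne_of_gt hpos)] at h
    have h3 : (3:ℝ) * (s:ℝ) = 8 := by ring_nf at h ⊢; linarith
    have h4 : 3 * s = 8 := by exact_mod_cast h3
    omega
end
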